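/- arXiv:2605.08358 — 9 statements merged into one kernel-verified Lean document; each statement's English description precedes it below -/
import Mathlib

section
/- Let γ > 0, let Q be an m×N real matrix with rows q_1,…,q_m (viewed as row vectors), and let R be a k×N real matrix. Then there exists an m×k real matrix L with Q = LR and ‖L‖_{2→∞} ≤ γ if and only if γ²·RᵀR ⪰ q_iᵀq_i for every i ∈ {1,…,m}. Moreover, if γ²·RᵀR ⪰ q_iᵀq_i for every i, then the matrix L = Q·R⁺, where R⁺ is the Moore–Penrose pseudoinverse of R, satisfies Q·R⁺·R = Q and ‖Q·R⁺‖_{2→∞} ≤ γ. -/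
open Matrix

/-- `‖M‖_{2→∞}`: the maximum ℓ2 norm of a row of `M`. -/
noncomputable def rowNorm2inf {α β : Type*} [Fintype α] [Fintype β] (M : Matrix α β ℝ) : ℝ :=
  ⨆ i, Real.sqrt (∑ j, (M i j) ^ 2)

/-- `P` satisfies the four Penrose conditions for `R`, i.e. `P` is the
Moore–Penrose pseudoinverse of `R`. -/
def IsMoorePenrose {k N : ℕ} (R : Matrix (Fin k) (Fin N) ℝ)
    (P : Matrix (Fin N) (Fin k) ℝ) : Prop :=
  R * P * R = R ∧ P * R * P = P ∧ (R * P)ᵀ = R * P ∧ (P * R)ᵀ = P * R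

lemma aux_dp_nonneg {n : ℕ} (v : Fin n → ℝ) : 0 ≤ v ⬝ᵥ v :=
  Finset.sum_nonneg fun i _ => mul_self_nonneg _

/-- Orthogonal decomposition: any vector splits as `A *ᵥ y + w` with `Aᵀ *ᵥ w = 0`. -/
lemma aux_decomp {a b : ℕ} (A : Matrix (Fin a) (Fin b) ℝ) (z : Fin a → ℝ) :
    ∃ (y : Fin b → ℝ) (w : Fin a → ℝ), z = A *ᵥ y + w ∧ Aᵀ *ᵥ w = 0 := by
  classical
  set K : Submodule ℝ (EuclideanSpace ℝ (Fin a)) := LinearMap.range (Matrix.toEuclideanLin A)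
  obtain ⟨s, hs, w, hw, hz⟩ :=
    K.exists_add_mem_mem_orthogonal ((WithLp.equiv 2 (Fin a → ℝ)).symm z)
  obtain ⟨u, hu⟩ := hs
  refine ⟨(WithLp.equiv 2 (Fin b → ℝ)) u, (WithLp.equiv 2 (Fin a → ℝ)) w, ?_, ?_⟩
  · have hz' : z = (WithLp.equiv 2 (Fin a → ℝ)) (s + w) := by
      have := congrArg (WithLp.equiv 2 (Fin a → ℝ)) hz
      simpa using this
    have hsv : (WithLp.equiv 2 (Fin a → ℝ)) s = A *ᵥ (WithLp.equiv 2 (Fin b → ℝ)) u := by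
      rw [← hu]; rfl
    calc z = (WithLp.equiv 2 (Fin a → ℝ)) (s + w) := hz'
    _ = (WithLp.equiv 2 (Fin a → ℝ)) s + (WithLp.equiv 2 (Fin a → ℝ)) w := rfl
    _ = A *ᵥ (WithLp.equiv 2 (Fin b → ℝ)) u + (WithLp.equiv 2 (Fin a → ℝ)) w := by rw [hsv]
  · have key : ∀ x : Fin b → ℝ, (A *ᵥ x) ⬝ᵥ (WithLp.equiv 2 (Fin a → ℝ)) w = 0 := by
      intro x
      have hmem : Matrix.toEuclideanLin A ((WithLp.equiv 2 (Fin b → ℝ)).symm x) ∈ K :=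
        LinearMap.mem_range_self _ _
      have := (Submodule.mem_orthogonal K w).mp hw _ hmem
      rw [dotProduct_comm]
      simpa [EuclideanSpace.inner_eq_star_dotProduct, Matrix.toEuclideanLin_apply] using this
    have h2 : (Aᵀ *ᵥ (WithLp.equiv 2 (Fin a → ℝ)) w) ⬝ᵥ
        (Aᵀ *ᵥ (WithLp.equiv 2 (Fin a → ℝ)) w) = 0 := by
      have := key (Aᵀ *ᵥ (WithLp.equiv 2 (Fin a → ℝ)) w)
      rw [dotProduct_comm] at this
      rwa [Matrix.dotProduct_mulVec, ← Matrix.mulVec_transpose] at this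
    exact dotProduct_self_eq_zero.mp h2

lemma aux_quad {N k : ℕ} (γ : ℝ) (R : Matrix (Fin k) (Fin N) ℝ) (q x : Fin N → ℝ) :
    x ⬝ᵥ ((γ ^ 2 • (Rᵀ * R) - vecMulVec q q) *ᵥ x)
      = γ ^ 2 * ((R *ᵥ x) ⬝ᵥ (R *ᵥ x)) - (q ⬝ᵥ x) ^ 2 := by
  have h2 : vecMulVec q q *ᵥ x = (q ⬝ᵥ x) • q := by
    funext i
    simp [vecMulVec, mulVec, dotProduct, Finset.mul_sum, mul_comm, mul_assoc, mul_left_comm]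
  rw [Matrix.sub_mulVec, dotProduct_sub, Matrix.smul_mulVec,
    dotProduct_smul, h2, dotProduct_smul, ← Matrix.mulVec_mulVec,
    Matrix.dotProduct_mulVec, Matrix.vecMul_transpose]
  have hc : x ⬝ᵥ q = q ⬝ᵥ x := dotProduct_comm _ _
  rw [hc]
  simp [smul_eq_mul]
  ring

lemma aux_key {N k : ℕ} {γ : ℝ} (hγ : 0 < γ) (R : Matrix (Fin k) (Fin N) ℝ) (q : Fin N → ℝ)
    (h : (γ ^ 2 • (Rᵀ * R) - vecMulVec q q).PosSemidef) :
    ∃ c : Fin k → ℝ, Rᵀ *ᵥ c = q ∧ c ⬝ᵥ c ≤ γ ^ 2 := by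
  obtain ⟨u, v, hq, hv⟩ := aux_decomp Rᵀ q
  have hRv : R *ᵥ v = 0 := by rwa [transpose_transpose] at hv
  have hpos := h.dotProduct_mulVec_nonneg v
  rw [show star v = v from star_trivial v, aux_quad γ R q v, hRv] at hpos
  have hqv : q ⬝ᵥ v = v ⬝ᵥ v := by
    rw [hq, add_dotProduct]
    have h3 : (Rᵀ *ᵥ u) ⬝ᵥ v = u ⬝ᵥ (R *ᵥ v) := by
      rw [dotProduct_comm, Matrix.dotProduct_mulVec, ← Matrix.mulVec_transpose,
        transpose_transpose, dotProduct_comm]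
    rw [h3, hRv]
    simp
  rw [hqv] at hpos
  simp only [zero_dotProduct, mul_zero, zero_sub, neg_nonneg] at hpos
  have hvv : v ⬝ᵥ v = 0 := by
    have h0 : (v ⬝ᵥ v) ^ 2 = 0 := le_antisymm hpos (sq_nonneg _)
    exact (pow_eq_zero_iff two_ne_zero).mp h0
  have hv0 : v = 0 := dotProduct_self_eq_zero.mp hvv
  -- now q = Rᵀ *ᵥ u
  have hq' : q = Rᵀ *ᵥ u := by rw [hq, hv0]; simp
  obtain ⟨y, w, huyw, hw⟩ := aux_decomp R u
  have hq2 : Rᵀ *ᵥ (R *ᵥ y) = q := by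
    rw [hq', huyw, Matrix.mulVec_add, hw, add_zero]
  set c := R *ᵥ y with hc
  have hcc : c ⬝ᵥ c = q ⬝ᵥ y := by
    rw [← hq2, dotProduct_comm, Matrix.dotProduct_mulVec, ← Matrix.mulVec_transpose]
  have hpos2 := h.dotProduct_mulVec_nonneg y
  rw [show star y = y from star_trivial y, aux_quad γ R q y] at hpos2
  have hqy : q ⬝ᵥ y = c ⬝ᵥ c := hcc.symm
  rw [hqy, ← hc] at hpos2
  refine ⟨c, hq2, ?_⟩
  rcases eq_or_lt_of_le (aux_dp_nonneg c) with h0 | h0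
  · rw [← h0]; positivity
  · nlinarith [hpos2]

lemma rowNorm2inf_le {α β : Type*} [Fintype α] [Fintype β] {M : Matrix α β ℝ} {γ : ℝ}
    (hγ : 0 ≤ γ) (h : ∀ i, ∑ j, (M i j) ^ 2 ≤ γ ^ 2) : rowNorm2inf M ≤ γ := by
  unfold rowNorm2inf
  rcases isEmpty_or_nonempty α with hα | hα
  · rw [Real.iSup_of_isEmpty]; exact hγ
  · exact ciSup_le fun i => by
      calc Real.sqrt (∑ j, (M i j) ^ 2) ≤ Real.sqrt (γ ^ 2) := Real.sqrt_le_sqrt (h i)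
      _ = γ := by rw [Real.sqrt_sq hγ]

lemma sq_sum_le_of_rowNorm2inf_le {α β : Type*} [Fintype α] [Fintype β] {M : Matrix α β ℝ}
    {γ : ℝ} (h : rowNorm2inf M ≤ γ) (i : α) : ∑ j, (M i j) ^ 2 ≤ γ ^ 2 := by
  have hb : BddAbove (Set.range fun i => Real.sqrt (∑ j, (M i j) ^ 2)) :=
    Set.Finite.bddAbove (Set.finite_range _)
  have h1 : Real.sqrt (∑ j, (M i j) ^ 2) ≤ γ := le_trans (le_ciSup hb i) h
  have h2 : (0:ℝ) ≤ ∑ j, (M i j) ^ 2 := Finset.sum_nonneg fun j _ => sq_nonneg _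
  calc ∑ j, (M i j) ^ 2 = (Real.sqrt (∑ j, (M i j) ^ 2)) ^ 2 := (Real.sq_sqrt h2).symm
  _ ≤ γ ^ 2 := pow_le_pow_left₀ (Real.sqrt_nonneg _) h1 2

lemma aux_row_mul {m k n : ℕ} (C : Matrix (Fin m) (Fin k) ℝ) (B : Matrix (Fin k) (Fin n) ℝ)
    (i : Fin m) : (C * B) i = C i ᵥ* B := by
  funext j
  simp [Matrix.mul_apply, Matrix.vecMul, dotProduct]

lemma aux_herm {N k : ℕ} (γ : ℝ) (R : Matrix (Fin k) (Fin N) ℝ) (q : Fin N → ℝ) :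
    (γ ^ 2 • (Rᵀ * R) - vecMulVec q q).IsHermitian := by
  rw [Matrix.IsHermitian, conjTranspose_eq_transpose_of_trivial, transpose_sub,
    transpose_smul]
  congr 1
  · congr 1
    rw [transpose_mul, transpose_transpose]
  · funext i j
    simp [vecMulVec, mul_comm]

lemma aux_proj_bound {k : ℕ} {γ : ℝ} (Pr : Matrix (Fin k) (Fin k) ℝ) (hsym : Prᵀ = Pr)
    (hidem : Pr * Pr = Pr) (c : Fin k → ℝ) (hc : c ⬝ᵥ c ≤ γ ^ 2) (hγ : 0 < γ) :
    (Pr *ᵥ c) ⬝ᵥ (Pr *ᵥ c) ≤ γ ^ 2 := by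
  set d := Pr *ᵥ c with hd
  have h1 : d ⬝ᵥ d = d ⬝ᵥ c := by
    conv_lhs => rw [hd]
    rw [dotProduct_comm, Matrix.dotProduct_mulVec, ← Matrix.mulVec_transpose, hsym, hd,
      Matrix.mulVec_mulVec, hidem, dotProduct_comm]
  have CS := Finset.sum_mul_sq_le_sq_mul_sq Finset.univ d c
  have hdd : d ⬝ᵥ d = ∑ j, d j ^ 2 := by simp [dotProduct, sq]
  have hcc : c ⬝ᵥ c = ∑ j, c j ^ 2 := by simp [dotProduct, sq]
  have hdnn : 0 ≤ d ⬝ᵥ d := aux_dp_nonneg d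
  rcases eq_or_lt_of_le hdnn with h0 | h0
  · rw [← h0]; positivity
  · have : (d ⬝ᵥ d) ^ 2 ≤ (d ⬝ᵥ d) * (c ⬝ᵥ c) := by
      calc (d ⬝ᵥ d) ^ 2 = (d ⬝ᵥ c) ^ 2 := by rw [h1]
      _ = (∑ j, d j * c j) ^ 2 := by rfl
      _ ≤ (∑ j, d j ^ 2) * (∑ j, c j ^ 2) := CS
      _ = (d ⬝ᵥ d) * (c ⬝ᵥ c) := by rw [hdd, hcc]
    nlinarith

theorem stmt0 {m N k : ℕ} (γ : ℝ) (hγ : 0 < γ)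
    (Q : Matrix (Fin m) (Fin N) ℝ) (R : Matrix (Fin k) (Fin N) ℝ) :
    ((∃ L : Matrix (Fin m) (Fin k) ℝ, L * R = Q ∧ rowNorm2inf L ≤ γ) ↔
      (∀ i : Fin m, (γ ^ 2 • (Rᵀ * R) - vecMulVec (Q i) (Q i)).PosSemidef)) ∧
    ((∀ i : Fin m, (γ ^ 2 • (Rᵀ * R) - vecMulVec (Q i) (Q i)).PosSemidef) →
      ∀ P : Matrix (Fin N) (Fin k) ℝ, IsMoorePenrose R P →
        Q * P * R = Q ∧ rowNorm2inf (Q * P) ≤ γ) := by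
  have hγ' : (0:ℝ) ≤ γ := hγ.le
  constructor
  · constructor
    · rintro ⟨L, hLR, hL⟩ i
      refine Matrix.PosSemidef.of_dotProduct_mulVec_nonneg (aux_herm γ R (Q i)) fun x => ?_
      rw [show star x = x from star_trivial x, aux_quad]
      have hQx : Q i ⬝ᵥ x = (L i) ⬝ᵥ (R *ᵥ x) := by
        rw [← hLR]
        simp only [dotProduct, mulVec, Matrix.mul_apply, Finset.sum_mul]
        rw [Finset.sum_comm]
        exact Finset.sum_congr rfl fun t _ => by
          rw [Finset.mul_sum]
          exact Finset.sum_congr rfl fun j _ => by ring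
      rw [hQx]
      have CS := Finset.sum_mul_sq_le_sq_mul_sq Finset.univ (L i) (R *ᵥ x)
      have hrow := sq_sum_le_of_rowNorm2inf_le hL i
      have hnn := aux_dp_nonneg (R *ᵥ x)
      have hRx : (R *ᵥ x) ⬝ᵥ (R *ᵥ x) = ∑ j, (R *ᵥ x) j ^ 2 := by simp [dotProduct, sq]
      have hLd : (L i ⬝ᵥ (R *ᵥ x)) ^ 2 = (∑ j, L i j * (R *ᵥ x) j) ^ 2 := rfl
      nlinarith
    · intro h
      choose c hc1 hc2 using fun i => aux_key hγ R (Q i) (h i)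
      refine ⟨Matrix.of c, ?_, ?_⟩
      · funext i j
        have : (Matrix.of c * R) i = Q i := by
          rw [aux_row_mul, ← Matrix.mulVec_transpose]
          exact hc1 i
        exact congrFun this j
      · exact rowNorm2inf_le hγ' fun i => by
          simpa [dotProduct, sq] using hc2 i
  · intro h P hP
    obtain ⟨hRPR, hPRP, hRPsym, hPRsym⟩ := hP
    choose c hc1 hc2 using fun i => aux_key hγ R (Q i) (h i)
    have hrow : ∀ i, Q i = c i ᵥ* R := fun i => by rw [← hc1 i, Matrix.mulVec_transpose]
    have hPr : (R * P) * (R * P) = R * P := by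
      calc (R * P) * (R * P) = (R * P * R) * P := by rw [Matrix.mul_assoc (R * P) R P]
      _ = R * P := by rw [hRPR]
    have hQP : ∀ i, (Q * P) i = (R * P) *ᵥ c i := by
      intro i
      rw [aux_row_mul, hrow i, Matrix.vecMul_vecMul, ← Matrix.mulVec_transpose, hRPsym]
    constructor
    · funext i j
      have e : (Q * P * R) i = Q i := by
        rw [aux_row_mul, hQP i, ← Matrix.mulVec_transpose, Matrix.mulVec_mulVec,
          ← hRPsym, ← transpose_mul, hRPR, Matrix.mulVec_transpose, ← hrow i]
      exact congrFun e j
    · refine rowNorm2inf_le hγ' fun i => ?_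
      have hb := aux_proj_bound (R * P) hRPsym hPr (c i) (hc2 i) hγ
      calc ∑ j, ((Q * P) i j) ^ 2 = ((R * P) *ᵥ c i) ⬝ᵥ ((R * P) *ᵥ c i) := by
            simp only [hQP i]
            simp [dotProduct, sq]
      _ ≤ γ ^ 2 := hb
end

section
/- For every m×N real matrix Q with rows q_1,…,q_m (viewed as row vectors), the following two infima are equal: inf{‖L‖_{2→∞}·‖R‖_F : k ∈ ℕ, L ∈ ℝ^{m×k}, R ∈ ℝ^{k×N}, LR = Q} = inf{√(tr X) : X an N×N positive semidefinite real matrix with X ⪰ q_iᵀq_i for all i ∈ {1,…,m}}. (The left-hand side equals the factorization norm γ_F(Qᵀ).) -/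
open Matrix

/-- `‖M‖_F`: the Frobenius norm of `M`. -/
noncomputable def frobNorm {α β : Type*} [Fintype α] [Fintype β] (M : Matrix α β ℝ) : ℝ :=
  Real.sqrt (∑ i, ∑ j, (M i j) ^ 2)


section Stmt1Aux
variable {n : ℕ}

lemma quad_nonneg' {P : Matrix (Fin n) (Fin n) ℝ} (hP : P.PosSemidef) (x : Fin n → ℝ) :
    0 ≤ x ⬝ᵥ P *ᵥ x := by simpa using hP.dotProduct_mulVec_nonneg x

lemma posSemidef_of_quad' {P : Matrix (Fin n) (Fin n) ℝ} (h1 : Pᵀ = P)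
    (h2 : ∀ x, 0 ≤ x ⬝ᵥ P *ᵥ x) : P.PosSemidef :=
  PosSemidef.of_dotProduct_mulVec_nonneg (by rw [IsHermitian, conjTranspose_eq_transpose_of_trivial, h1]) fun x => by simpa using h2 x

lemma mulVec_vecMulVec' (q v : Fin n → ℝ) : vecMulVec q q *ᵥ v = (q ⬝ᵥ v) • q := by
  ext i
  simp only [mulVec, vecMulVec, dotProduct, Pi.smul_apply, smul_eq_mul, of_apply]
  rw [Finset.sum_mul]
  exact Finset.sum_congr rfl fun j _ => by ring

lemma quad_vecMulVec' (q v : Fin n → ℝ) : v ⬝ᵥ (vecMulVec q q) *ᵥ v = (q ⬝ᵥ v) ^ 2 := by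
  rw [mulVec_vecMulVec', dotProduct_smul, smul_eq_mul, dotProduct_comm, sq]

end Stmt1Aux

section More
variable {n : ℕ}

lemma psd_vecMulVec' (q : Fin n → ℝ) : (vecMulVec q q).PosSemidef :=
  posSemidef_of_quad' (by ext i j; simp [vecMulVec, mul_comm]) fun v => by
    rw [quad_vecMulVec']; positivity

lemma smul_one_posDef' {ε : ℝ} (hε : 0 < ε) : (ε • (1 : Matrix (Fin n) (Fin n) ℝ)).PosDef := by
  refine PosDef.of_dotProduct_mulVec_pos ?_ ?_
  · rw [IsHermitian, conjTranspose_eq_transpose_of_trivial, transpose_smul, transpose_one]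
  · intro x hx
    simp only [smul_mulVec, one_mulVec, dotProduct_smul, smul_eq_mul]
    exact mul_pos hε (dotProduct_star_self_pos_iff.mpr hx)

lemma diag_mul_mul_transpose' {m' : ℕ} (A : Matrix (Fin m') (Fin n) ℝ)
    (P : Matrix (Fin n) (Fin n) ℝ) (i : Fin m') :
    (A * P * Aᵀ) i i = (A i) ⬝ᵥ (P *ᵥ (A i)) := by
  simp only [mul_apply, dotProduct, mulVec, transpose_apply, Finset.sum_mul, Finset.mul_sum]
  rw [Finset.sum_comm]
  exact Finset.sum_congr rfl fun k _ => Finset.sum_congr rfl fun j _ => by ring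

lemma row_sq_sum' {m' k : ℕ} (L : Matrix (Fin m') (Fin k) ℝ) (i : Fin m') :
    ∑ j, (L i j) ^ 2 = (L * Lᵀ) i i := by
  simp [mul_apply, sq]

lemma frob_sq_eq_trace' {k : ℕ} (R : Matrix (Fin k) (Fin n) ℝ) :
    ∑ i, ∑ j, (R i j) ^ 2 = (R * Rᵀ).trace := by
  simp [Matrix.trace, mul_apply, sq, Matrix.diag]

lemma trace_nonneg' {X : Matrix (Fin n) (Fin n) ℝ} (hX : X.PosSemidef) : 0 ≤ X.trace := by
  refine Finset.sum_nonneg fun i _ => ?_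
  have := quad_nonneg' hX (Pi.single i 1)
  simpa [mulVec_single, dotProduct, Pi.single_apply, Finset.sum_ite_eq] using this

end More

lemma quad_tr_mul' {k n : ℕ} (R : Matrix (Fin k) (Fin n) ℝ) (x : Fin n → ℝ) :
    x ⬝ᵥ (Rᵀ * R) *ᵥ x = (R *ᵥ x) ⬝ᵥ (R *ᵥ x) := by
  rw [← mulVec_mulVec, dotProduct_mulVec, vecMul_transpose]

lemma mul_row_dot' {m k n : ℕ} (L : Matrix (Fin m) (Fin k) ℝ) (R : Matrix (Fin k) (Fin n) ℝ)
    (v : Fin n → ℝ) (i : Fin m) : (L * R) i ⬝ᵥ v = (L i) ⬝ᵥ (R *ᵥ v) := by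
  simp only [dotProduct, mul_apply, mulVec, Finset.sum_mul, Finset.mul_sum]
  rw [Finset.sum_comm]
  exact Finset.sum_congr rfl fun a _ => Finset.sum_congr rfl fun b _ => by ring

lemma rowNorm2inf_nonneg {α β : Type*} [Fintype α] [Fintype β] (M : Matrix α β ℝ) :
    0 ≤ rowNorm2inf M := Real.iSup_nonneg fun _ => Real.sqrt_nonneg _

lemma exists_B_eq {m N : ℕ} (Q : Matrix (Fin m) (Fin N) ℝ) (k : ℕ)
    (L : Matrix (Fin m) (Fin k) ℝ) (R : Matrix (Fin k) (Fin N) ℝ) (hLR : L * R = Q) :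
    ∃ X : Matrix (Fin N) (Fin N) ℝ, X.PosSemidef ∧
      (∀ i, (X - vecMulVec (Q i) (Q i)).PosSemidef) ∧
      Real.sqrt X.trace = rowNorm2inf L * frobNorm R := by
  set a := rowNorm2inf L with ha
  have ha0 : 0 ≤ a := rowNorm2inf_nonneg L
  have hrow : ∀ i : Fin m, ∑ j, (L i j) ^ 2 ≤ a ^ 2 := by
    intro i
    have h1 : Real.sqrt (∑ j, (L i j) ^ 2) ≤ a := by
      rw [ha, rowNorm2inf]
      exact le_ciSup (f := fun i : Fin m => Real.sqrt (∑ j, (L i j) ^ 2)) (Set.Finite.bddAbove (Set.finite_range _)) i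
    exact (Real.sqrt_le_left ha0).mp h1
  refine ⟨(a ^ 2) • (Rᵀ * R), ?_, ?_, ?_⟩
  · refine posSemidef_of_quad' ?_ fun x => ?_
    · rw [transpose_smul, transpose_mul, transpose_transpose]
    · rw [smul_mulVec, dotProduct_smul, smul_eq_mul, quad_tr_mul']
      have hw : (R *ᵥ x) ⬝ᵥ (R *ᵥ x) = ∑ j, ((R *ᵥ x) j) ^ 2 := by simp [dotProduct, sq]
      rw [hw]; positivity
  · intro i
    refine posSemidef_of_quad' ?_ fun v => ?_
    · rw [transpose_sub, transpose_smul, transpose_mul, transpose_transpose]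
      congr 1
      ext i' j'; simp [vecMulVec, mul_comm]
    · rw [sub_mulVec, dotProduct_sub, quad_vecMulVec', smul_mulVec, dotProduct_smul,
        smul_eq_mul, quad_tr_mul', sub_nonneg]
      have hq : Q i ⬝ᵥ v = (L i) ⬝ᵥ (R *ᵥ v) := by rw [← hLR, mul_row_dot']
      rw [hq]
      set w := R *ᵥ v
      have hCS : ((L i) ⬝ᵥ w) ^ 2 ≤ (∑ j, (L i j) ^ 2) * (∑ j, (w j) ^ 2) := by
        simpa [dotProduct, sq] using
          Finset.sum_mul_sq_le_sq_mul_sq Finset.univ (L i) w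
      have hw : w ⬝ᵥ w = ∑ j, (w j) ^ 2 := by simp [dotProduct, sq]
      have hwn : 0 ≤ ∑ j, (w j) ^ 2 := by positivity
      calc ((L i) ⬝ᵥ w) ^ 2 ≤ (∑ j, (L i j) ^ 2) * (∑ j, (w j) ^ 2) := hCS
        _ ≤ a ^ 2 * (∑ j, (w j) ^ 2) := by
            exact mul_le_mul_of_nonneg_right (hrow i) hwn
        _ = a ^ 2 * (w ⬝ᵥ w) := by rw [hw]
  · rw [trace_smul, smul_eq_mul, trace_mul_comm, ← frob_sq_eq_trace',
      Real.sqrt_mul (sq_nonneg a), Real.sqrt_sq ha0]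
    rfl

open scoped MatrixOrder in
lemma exists_A_le {m N : ℕ} (Q : Matrix (Fin m) (Fin N) ℝ)
    (X : Matrix (Fin N) (Fin N) ℝ) (hX : X.PosSemidef)
    (hQi : ∀ i, (X - vecMulVec (Q i) (Q i)).PosSemidef) {ε : ℝ} (hε : 0 < ε) :
    ∃ (L : Matrix (Fin m) (Fin N) ℝ) (R : Matrix (Fin N) (Fin N) ℝ),
      L * R = Q ∧ rowNorm2inf L * frobNorm R ≤ Real.sqrt (X.trace + ε * N) := by
  set M := X + ε • (1 : Matrix (Fin N) (Fin N) ℝ) with hMdef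
  have hM : M.PosDef := Matrix.PosDef.posSemidef_add hX (smul_one_posDef' hε)
  have hdet : IsUnit M.det := hM.det_pos.ne'.isUnit
  set R := CFC.sqrt M with hRdef
  have hRR : R * R = M := CFC.sqrt_mul_sqrt_self M (Matrix.nonneg_iff_posSemidef.mpr hM.posSemidef)
  have hRsymm : Rᵀ = R := by
    have h := (Matrix.nonneg_iff_posSemidef.mp (CFC.sqrt_nonneg M)).isHermitian
    rwa [IsHermitian, conjTranspose_eq_transpose_of_trivial] at h
  have hMinvsymm : (M⁻¹)ᵀ = M⁻¹ := by
    have h := hM.isHermitian.inv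
    rwa [IsHermitian, conjTranspose_eq_transpose_of_trivial] at h
  set L := Q * M⁻¹ * R with hLdef
  have hLR : L * R = Q := by
    rw [hLdef, Matrix.mul_assoc (Q * M⁻¹) R R, hRR, Matrix.mul_assoc,
      nonsing_inv_mul M hdet, Matrix.mul_one]
  have hLLt : L * Lᵀ = Q * M⁻¹ * Qᵀ := by
    have h1 : R * (R * (M⁻¹ * Qᵀ)) = Qᵀ := by
      rw [← Matrix.mul_assoc R R, hRR, ← Matrix.mul_assoc M, mul_nonsing_inv M hdet,
        Matrix.one_mul]
    rw [hLdef, transpose_mul, transpose_mul, hRsymm, hMinvsymm]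
    simp only [Matrix.mul_assoc]
    rw [h1]
  have hrow : ∀ i : Fin m, ∑ j, (L i j) ^ 2 ≤ 1 := by
    intro i
    rw [row_sq_sum', hLLt, diag_mul_mul_transpose']
    set w : Fin N → ℝ := M⁻¹ *ᵥ Q i with hw
    set s : ℝ := Q i ⬝ᵥ w with hs
    have hs0 : 0 ≤ s := quad_nonneg' hM.inv.posSemidef (Q i)
    have hMw : M *ᵥ w = Q i := by
      rw [hw, mulVec_mulVec, mul_nonsing_inv M hdet, one_mulVec]
    have hsub : X - vecMulVec (Q i) (Q i) + ε • (1 : Matrix (Fin N) (Fin N) ℝ)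
        = M - vecMulVec (Q i) (Q i) := by rw [hMdef]; abel
    have h1 := quad_nonneg' ((hQi i).add (smul_one_posDef' hε).posSemidef) w
    rw [hsub, sub_mulVec, dotProduct_sub, quad_vecMulVec'] at h1
    have hwMw : w ⬝ᵥ M *ᵥ w = s := by rw [hMw, dotProduct_comm, hs]
    rw [hwMw] at h1
    -- h1 : 0 ≤ s - (Q i ⬝ᵥ w) ^ 2, and Q i ⬝ᵥ w = s
    have h2 : s ^ 2 ≤ s := by rw [hs] at h1 ⊢; linarith
    nlinarith
  have hrn : rowNorm2inf L ≤ 1 :=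
    Real.iSup_le (fun i => Real.sqrt_le_one.mpr (hrow i)) zero_le_one
  have hfrob : frobNorm R = Real.sqrt (X.trace + ε * N) := by
    rw [frobNorm, frob_sq_eq_trace', hRsymm, hRR, hMdef, trace_add, trace_smul, trace_one,
      smul_eq_mul, Fintype.card_fin]
  refine ⟨L, R, hLR, ?_⟩
  rw [← hfrob]
  exact mul_le_of_le_one_left (Real.sqrt_nonneg _) hrn

theorem stmt1 {m N : ℕ} (Q : Matrix (Fin m) (Fin N) ℝ) :
    sInf { c : ℝ | ∃ (k : ℕ) (L : Matrix (Fin m) (Fin k) ℝ) (R : Matrix (Fin k) (Fin N) ℝ),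
        L * R = Q ∧ c = rowNorm2inf L * frobNorm R } =
    sInf { c : ℝ | ∃ X : Matrix (Fin N) (Fin N) ℝ, X.PosSemidef ∧
        (∀ i : Fin m, (X - vecMulVec (Q i) (Q i)).PosSemidef) ∧ c = Real.sqrt X.trace } := by
  set A : Set ℝ := { c : ℝ | ∃ (k : ℕ) (L : Matrix (Fin m) (Fin k) ℝ)
      (R : Matrix (Fin k) (Fin N) ℝ), L * R = Q ∧ c = rowNorm2inf L * frobNorm R } with hA
  set B : Set ℝ := { c : ℝ | ∃ X : Matrix (Fin N) (Fin N) ℝ, X.PosSemidef ∧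
      (∀ i : Fin m, (X - vecMulVec (Q i) (Q i)).PosSemidef) ∧ c = Real.sqrt X.trace } with hB
  have hAne : A.Nonempty :=
    ⟨rowNorm2inf Q * frobNorm (1 : Matrix (Fin N) (Fin N) ℝ),
      ⟨N, Q, 1, by rw [Matrix.mul_one], rfl⟩⟩
  have hAbdd : BddBelow A := by
    refine ⟨0, ?_⟩
    rintro a ⟨k, L, R, hLR, rfl⟩
    exact mul_nonneg (rowNorm2inf_nonneg L) (Real.sqrt_nonneg _)
  have hBbdd : BddBelow B := by
    refine ⟨0, ?_⟩
    rintro b ⟨X, hX, hQi, rfl⟩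
    exact Real.sqrt_nonneg _
  have hsum : ∀ s : Finset (Fin m), (∑ j ∈ s, vecMulVec (Q j) (Q j)).PosSemidef := fun s =>
    Finset.sum_induction _ _ (fun a b ha hb => ha.add hb) Matrix.PosSemidef.zero
      (fun j _ => psd_vecMulVec' (Q j))
  have hBne : B.Nonempty := by
    refine ⟨Real.sqrt (∑ j, vecMulVec (Q j) (Q j)).trace,
      ∑ j, vecMulVec (Q j) (Q j), hsum Finset.univ, fun i => ?_, rfl⟩
    have h1 : (∑ j, vecMulVec (Q j) (Q j)) - vecMulVec (Q i) (Q i)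
        = ∑ j ∈ Finset.univ.erase i, vecMulVec (Q j) (Q j) := by
      rw [← Finset.add_sum_erase _ _ (Finset.mem_univ i), add_sub_cancel_left]
    rw [h1]
    exact hsum _
  apply le_antisymm
  · refine le_csInf hBne ?_
    rintro b ⟨X, hX, hQi, rfl⟩
    have key : ∀ ε : ℝ, 0 < ε → sInf A ≤ Real.sqrt (X.trace + ε * N) := by
      intro ε hε
      obtain ⟨L, R, hLR, hle⟩ := exists_A_le Q X hX hQi hε
      exact le_trans (csInf_le hAbdd ⟨N, L, R, hLR, rfl⟩) hle
    have ht0 : 0 ≤ X.trace := trace_nonneg' hX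
    refine le_of_forall_pos_le_add fun δ hδ => ?_
    have hεpos : 0 < δ ^ 2 / (N + 1) := by positivity
    refine (key _ hεpos).trans ?_
    have h1 : X.trace + δ ^ 2 / (N + 1) * N ≤ (Real.sqrt X.trace + δ) ^ 2 := by
      have h2 : δ ^ 2 / (N + 1) * (N : ℝ) ≤ δ ^ 2 := by
        rw [div_mul_eq_mul_div, div_le_iff₀ (by positivity)]
        nlinarith [sq_nonneg δ, Nat.cast_nonneg (α := ℝ) N]
      have h3 : (Real.sqrt X.trace + δ) ^ 2
          = X.trace + 2 * δ * Real.sqrt X.trace + δ ^ 2 := by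
        rw [add_sq, Real.sq_sqrt ht0]; ring
      nlinarith [Real.sqrt_nonneg X.trace]
    calc Real.sqrt (X.trace + δ ^ 2 / (N + 1) * N)
        ≤ Real.sqrt ((Real.sqrt X.trace + δ) ^ 2) := Real.sqrt_le_sqrt h1
      _ = Real.sqrt X.trace + δ := Real.sqrt_sq (by positivity)
  · refine le_csInf hAne ?_
    rintro a ⟨k, L, R, hLR, rfl⟩
    obtain ⟨X, hX, hQi, heq⟩ := exists_B_eq Q k L R hLR
    exact heq ▸ csInf_le hBbdd ⟨X, hX, hQi, rfl⟩
end

section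
/- Let q_1,…,q_m be row vectors in ℝ^N, let y_1,…,y_m ≥ 0 be real numbers with ∑_{i=1}^m y_i ≤ 1, and let X be an N×N positive semidefinite real matrix with X ⪰ q_iᵀq_i for all i ∈ {1,…,m}. Then tr(√(∑_{i=1}^m y_i·q_iᵀq_i))² ≤ tr(X), where √(·) denotes the positive semidefinite matrix square root. -/
open Matrix

section

open scoped ComplexOrder

/-- The matrix square root of a positive semidefinite matrix, as defined in the older Mathlib
(`Matrix.PosSemidef.sqrt`, removed since). -/
noncomputable def Matrix.PosSemidef.sqrt {n 𝕜 : Type*} [Fintype n] [DecidableEq n] [RCLike 𝕜]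
    {A : Matrix n n 𝕜} (hA : A.PosSemidef) : Matrix n n 𝕜 :=
  hA.1.eigenvectorUnitary.1 * diagonal ((↑) ∘ (√·) ∘ hA.1.eigenvalues) *
    (star hA.1.eigenvectorUnitary : Matrix n n 𝕜)

end

section

open scoped ComplexOrder

private lemma Matrix.PosSemidef.sqrt_mul_self {n 𝕜 : Type*} [Fintype n] [DecidableEq n]
    [RCLike 𝕜] {A : Matrix n n 𝕜} (hA : A.PosSemidef) : hA.sqrt * hA.sqrt = A := by
  conv_rhs => rw [hA.1.spectral_theorem, Unitary.conjStarAlgAut_apply]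
  have hU : (star hA.1.eigenvectorUnitary : Matrix n n 𝕜) * hA.1.eigenvectorUnitary.1 = 1 :=
    Unitary.coe_star_mul_self _
  simp only [Matrix.PosSemidef.sqrt]
  rw [show ∀ a b c d e f : Matrix n n 𝕜, a * b * c * (d * e * f) = a * (b * (c * d) * e) * f by
    intros; simp only [mul_assoc], hU, mul_one, diagonal_mul_diagonal]
  congr 3
  funext i
  simp only [Function.comp_apply]
  rw [← RCLike.ofReal_mul, Real.mul_self_sqrt (hA.eigenvalues_nonneg i)]

private lemma Matrix.PosSemidef.posSemidef_sqrt {n 𝕜 : Type*} [Fintype n] [DecidableEq n]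
    [RCLike 𝕜] {A : Matrix n n 𝕜} (hA : A.PosSemidef) : hA.sqrt.PosSemidef := by
  unfold Matrix.PosSemidef.sqrt
  have hD : (diagonal ((↑) ∘ (√·) ∘ hA.1.eigenvalues) : Matrix n n 𝕜).PosSemidef := by
    rw [posSemidef_diagonal_iff]
    intro i
    simp only [Function.comp_apply]
    exact_mod_cast Real.sqrt_nonneg _
  have := hD.mul_mul_conjTranspose_same (hA.1.eigenvectorUnitary : Matrix n n 𝕜)
  simpa [Matrix.star_eq_conjTranspose] using this

end

private lemma trace_cs {N : ℕ} (P Q : Matrix (Fin N) (Fin N) ℝ) :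
    (trace (P * Q)) ^ 2 ≤ trace (Pᵀ * P) * trace (Qᵀ * Q) := by
  have h := Finset.sum_mul_sq_le_sq_mul_sq Finset.univ
    (fun p : Fin N × Fin N => P p.1 p.2) (fun p : Fin N × Fin N => Q p.2 p.1)
  have h1 : trace (P * Q) = ∑ p : Fin N × Fin N, P p.1 p.2 * Q p.2 p.1 := by
    simp [trace, diag, mul_apply, Fintype.sum_prod_type]
  have h2 : trace (Pᵀ * P) = ∑ p : Fin N × Fin N, (P p.1 p.2) ^ 2 := by
    simp only [trace, diag, mul_apply, transpose_apply, Fintype.sum_prod_type, sq]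
    exact Finset.sum_comm
  have h3 : trace (Qᵀ * Q) = ∑ p : Fin N × Fin N, (Q p.2 p.1) ^ 2 := by
    simp [trace, diag, mul_apply, transpose_apply, Fintype.sum_prod_type, sq]
  rw [h1, h2, h3]; exact h

private lemma quad_bound {N : ℕ} {X : Matrix (Fin N) (Fin N) ℝ} (hX : X.PosDef)
    {q : Fin N → ℝ} (h : (X - vecMulVec q q).PosSemidef) :
    q ⬝ᵥ (X⁻¹ *ᵥ q) ≤ 1 := by
  set v := X⁻¹ *ᵥ q with hv
  set t := q ⬝ᵥ v with ht
  have hdet : IsUnit X.det := (isUnit_iff_isUnit_det X).mp hX.isUnit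
  have hXv : X *ᵥ v = q := by
    rw [hv, mulVec_mulVec, Matrix.mul_nonsing_inv _ hdet, one_mulVec]
  have hpsd := h.dotProduct_mulVec_nonneg v
  have hmv : (X - vecMulVec q q) *ᵥ v = q - t • q := by
    rw [sub_mulVec, hXv]
    congr 1
    funext i
    simp [vecMulVec_apply, mulVec, dotProduct, ht, hv, Finset.mul_sum, mul_comm, mul_assoc]
  rw [hmv] at hpsd
  simp only [star_trivial, dotProduct_sub, dotProduct_smul, smul_eq_mul] at hpsd
  have hvq : v ⬝ᵥ q = t := dotProduct_comm v q
  rw [hvq] at hpsd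
  nlinarith [hpsd]

private lemma trace_mul_vecMulVec {N : ℕ} (M : Matrix (Fin N) (Fin N) ℝ) (a b : Fin N → ℝ) :
    trace (M * vecMulVec a b) = b ⬝ᵥ (M *ᵥ a) := by
  simp only [trace, diag, mul_apply, vecMulVec_apply, dotProduct, mulVec, Finset.mul_sum]
  refine Finset.sum_congr rfl fun i _ => Finset.sum_congr rfl fun j _ => by ring

theorem stmt2 {m N : ℕ} (q : Fin m → (Fin N → ℝ)) (y : Fin m → ℝ)
    (hy : ∀ i, 0 ≤ y i) (hy1 : ∑ i, y i ≤ 1)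
    (hM : (∑ i, y i • vecMulVec (q i) (q i)).PosSemidef)
    (X : Matrix (Fin N) (Fin N) ℝ) (hX : X.PosSemidef)
    (hXq : ∀ i, (X - vecMulVec (q i) (q i)).PosSemidef) :
    hM.sqrt.trace ^ 2 ≤ X.trace := by
  set A := ∑ i, y i • vecMulVec (q i) (q i) with hA
  set S := hM.sqrt with hSdef
  have hSS : S * S = A := hM.sqrt_mul_self
  have hSsymm : Sᵀ = S := by
    have := hM.posSemidef_sqrt.isHermitian
    rwa [IsHermitian, conjTranspose_eq_transpose_of_trivial] at this
  refine le_of_forall_pos_le_add fun ε hε => ?_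
  set δ := ε / (N + 1) with hδdef
  have hδ : 0 < δ := by positivity
  set Xe := X + δ • (1 : Matrix (Fin N) (Fin N) ℝ) with hXe
  have h1pd : (δ • (1 : Matrix (Fin N) (Fin N) ℝ)).PosDef := by
    rw [smul_one_eq_diagonal]
    exact posDef_diagonal_iff.mpr fun _ => hδ
  have hXepd : Xe.PosDef := Matrix.PosDef.posSemidef_add hX h1pd
  set R := hXepd.posSemidef.sqrt with hRdef
  have hRR : R * R = Xe := hXepd.posSemidef.sqrt_mul_self
  have hRsymm : Rᵀ = R := by
    have := hXepd.posSemidef.posSemidef_sqrt.isHermitian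
    rwa [IsHermitian, conjTranspose_eq_transpose_of_trivial] at this
  have hRdet : IsUnit R.det := by
    have : IsUnit (R.det * R.det) := by
      rw [← det_mul, hRR]
      exact (isUnit_iff_isUnit_det Xe).mp hXepd.isUnit
    exact isUnit_of_mul_isUnit_left this
  set B := R⁻¹ * S with hB
  have htr : trace S = trace (R * B) := by
    rw [hB, ← mul_assoc, Matrix.mul_nonsing_inv _ hRdet, one_mul]
  have hcs := trace_cs R B
  have hRtR : trace (Rᵀ * R) = trace Xe := by rw [hRsymm, hRR]
  have hBtB : trace (Bᵀ * B) = trace (Xe⁻¹ * A) := by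
    have hBt : Bᵀ = S * R⁻¹ := by
      rw [hB, transpose_mul, hSsymm, transpose_nonsing_inv, hRsymm]
    rw [hBt, hB, mul_assoc, ← mul_assoc (R⁻¹) R⁻¹ S]
    rw [show R⁻¹ * R⁻¹ = Xe⁻¹ by rw [← Matrix.mul_inv_rev, hRR]]
    rw [← mul_assoc, trace_mul_comm, ← mul_assoc, hSS]
    exact trace_mul_comm A Xe⁻¹
  have hXeq : ∀ i, (Xe - vecMulVec (q i) (q i)).PosSemidef := by
    intro i
    have : Xe - vecMulVec (q i) (q i)
        = (X - vecMulVec (q i) (q i)) + δ • (1 : Matrix (Fin N) (Fin N) ℝ) := by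
      rw [hXe]; abel
    rw [this]
    exact (hXq i).add h1pd.posSemidef
  have htrA : trace (Xe⁻¹ * A) ≤ 1 := by
    have : trace (Xe⁻¹ * A) = ∑ i, y i * (q i ⬝ᵥ (Xe⁻¹ *ᵥ q i)) := by
      rw [hA, Finset.mul_sum, trace_sum]
      refine Finset.sum_congr rfl fun i _ => ?_
      rw [Matrix.mul_smul, trace_smul, trace_mul_vecMulVec, smul_eq_mul]
    rw [this]
    calc ∑ i, y i * (q i ⬝ᵥ (Xe⁻¹ *ᵥ q i)) ≤ ∑ i, y i := by
          refine Finset.sum_le_sum fun i _ => ?_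
          have := quad_bound hXepd (hXeq i)
          nlinarith [hy i]
      _ ≤ 1 := hy1
  have hXtr : trace Xe = trace X + δ * N := by
    rw [hXe, trace_add, trace_smul, trace_one, smul_eq_mul]
    simp
  have hXtrnn : 0 ≤ trace X := by
    have : trace X = ∑ i, X i i := rfl
    rw [this]
    refine Finset.sum_le_sum (f := fun _ => (0:ℝ)) (fun i _ => ?_) |>.trans_eq' (by simp)
    have := hX.dotProduct_mulVec_nonneg (Pi.single i 1)
    simpa [dotProduct, Pi.single_apply] using this
  have hfinal : trace S ^ 2 ≤ trace Xe := by
    calc trace S ^ 2 = trace (R * B) ^ 2 := by rw [htr]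
      _ ≤ trace (Rᵀ * R) * trace (Bᵀ * B) := hcs
      _ = trace Xe * trace (Xe⁻¹ * A) := by rw [hRtR, hBtB]
      _ ≤ trace Xe * 1 := by
          apply mul_le_mul_of_nonneg_left htrA
          rw [hXtr]; positivity
      _ = trace Xe := mul_one _
  calc S.trace ^ 2 ≤ trace Xe := hfinal
    _ = trace X + δ * N := hXtr
    _ ≤ trace X + ε := by
        have : δ * N ≤ ε := by
          rw [hδdef]
          rw [div_mul_eq_mul_div, div_le_iff₀ (by positivity)]
          nlinarith [hε.le]
        linarith
end

section
/- Let N be a power of 2, let H be an N×N Hadamard matrix with rows h_1,…,h_N, and let Q be the N×N matrix with rows q_t = 2^{(t−1)/2}·h_t; for t ∈ {1,…,N} let Q_t be the t×N matrix with rows q_1,…,q_t. Then ‖q_1‖_∞ = 1, (N−1)/2 ≤ log₂(γ2(Q)) ≤ N/2, and for every real matrix R with N columns and ‖R‖_{1→2} ≤ 1 and all row vectors ℓ_1,…,ℓ_N (each with one coordinate per row of R) satisfying ℓ_t·R = q_t for every t ∈ {1,…,N}, there exists t ∈ {1,…,N} with ‖ℓ_t‖_2 ≥ √(N/2)·γ2(Q_t);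 in particular ‖ℓ_t‖_2 ≥ √(log₂(γ2(Q)))·γ2(Q_t) for this t. -/
open Matrix

/-- `‖M‖_{1→2}`: the maximum ℓ2 norm of a column of `M`. -/
noncomputable def colNorm12 {α β : Type*} [Fintype α] [Fintype β] (M : Matrix α β ℝ) : ℝ :=
  ⨆ j, Real.sqrt (∑ i, (M i j) ^ 2)

/-- The γ₂ factorization norm. -/
noncomputable def gamma2 {α β : Type*} [Fintype α] [Fintype β] (A : Matrix α β ℝ) : ℝ :=
  sInf { c : ℝ | ∃ (k : ℕ) (L : Matrix α (Fin k) ℝ) (R : Matrix (Fin k) β ℝ),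
    L * R = A ∧ c = rowNorm2inf L * colNorm12 R }

/-- Cauchy–Schwarz with square roots. -/
lemma cs_sum {ι : Type*} (s : Finset ι) (f g : ι → ℝ) :
    ∑ i ∈ s, f i * g i ≤
      Real.sqrt (∑ i ∈ s, f i ^ 2) * Real.sqrt (∑ i ∈ s, g i ^ 2) := by
  rw [← Real.sqrt_mul (by positivity)]
  calc ∑ i ∈ s, f i * g i ≤ |∑ i ∈ s, f i * g i| := le_abs_self _
    _ = Real.sqrt ((∑ i ∈ s, f i * g i) ^ 2) := (Real.sqrt_sq_eq_abs _).symm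
    _ ≤ _ := Real.sqrt_le_sqrt (Finset.sum_mul_sq_le_sq_mul_sq s f g)

lemma colNorm12_nonneg {α β : Type*} [Fintype α] [Fintype β] (M : Matrix α β ℝ) :
    0 ≤ colNorm12 M := Real.iSup_nonneg fun _ => Real.sqrt_nonneg _

lemma row_le_rowNorm2inf {α β : Type*} [Fintype α] [Fintype β] (M : Matrix α β ℝ) (i : α) :
    Real.sqrt (∑ j, (M i j) ^ 2) ≤ rowNorm2inf M := by
  unfold rowNorm2inf
  exact le_ciSup (Set.Finite.bddAbove (Set.finite_range fun i => Real.sqrt (∑ j, (M i j) ^ 2))) i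

lemma col_le_colNorm12 {α β : Type*} [Fintype α] [Fintype β] (M : Matrix α β ℝ) (j : β) :
    Real.sqrt (∑ i, (M i j) ^ 2) ≤ colNorm12 M := by
  unfold colNorm12
  exact le_ciSup (Set.Finite.bddAbove (Set.finite_range fun j => Real.sqrt (∑ i, (M i j) ^ 2))) j

lemma gamma2_bddBelow {α β : Type*} [Fintype α] [Fintype β] (A : Matrix α β ℝ) :
    BddBelow { c : ℝ | ∃ (k : ℕ) (L : Matrix α (Fin k) ℝ) (R : Matrix (Fin k) β ℝ),
      L * R = A ∧ c = rowNorm2inf L * colNorm12 R } := by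
  refine ⟨0, ?_⟩
  rintro c ⟨k, L, R, -, rfl⟩
  exact mul_nonneg (rowNorm2inf_nonneg L) (colNorm12_nonneg R)

lemma gamma2_nonneg {α β : Type*} [Fintype α] [Fintype β] (A : Matrix α β ℝ) :
    0 ≤ gamma2 A := by
  apply Real.sInf_nonneg
  rintro c ⟨k, L, R, -, rfl⟩
  exact mul_nonneg (rowNorm2inf_nonneg L) (colNorm12_nonneg R)

lemma entry_le_gamma2 {m N : ℕ} (A : Matrix (Fin m) (Fin N) ℝ) (i : Fin m) (j : Fin N) :
    |A i j| ≤ gamma2 A := by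
  refine le_csInf ⟨rowNorm2inf A * colNorm12 (1 : Matrix (Fin N) (Fin N) ℝ),
    N, A, 1, Matrix.mul_one A, rfl⟩ ?_
  rintro c ⟨k, L, R, hLR, rfl⟩
  have h1 : A i j = ∑ a, L i a * R a j := by rw [← hLR, Matrix.mul_apply]
  calc |A i j| = Real.sqrt ((∑ a, L i a * R a j) ^ 2) := by
        rw [Real.sqrt_sq_eq_abs, ← h1]
    _ ≤ Real.sqrt ((∑ a, L i a ^ 2) * (∑ a, R a j ^ 2)) :=
        Real.sqrt_le_sqrt (Finset.sum_mul_sq_le_sq_mul_sq _ _ _)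
    _ = Real.sqrt (∑ a, L i a ^ 2) * Real.sqrt (∑ a, R a j ^ 2) :=
        Real.sqrt_mul (by positivity) _
    _ ≤ rowNorm2inf L * colNorm12 R :=
        mul_le_mul (row_le_rowNorm2inf L i) (col_le_colNorm12 R j)
          (Real.sqrt_nonneg _) (rowNorm2inf_nonneg L)

lemma gamma2_le_colNorm12 {m N : ℕ} [NeZero m] (A : Matrix (Fin m) (Fin N) ℝ) :
    gamma2 A ≤ colNorm12 A := by
  have h1 : rowNorm2inf (1 : Matrix (Fin m) (Fin m) ℝ) = 1 := by
    unfold rowNorm2inf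
    have h : ∀ i : Fin m, Real.sqrt (∑ j, ((1 : Matrix (Fin m) (Fin m) ℝ) i j) ^ 2) = 1 := by
      intro i
      have : ∑ j, ((1 : Matrix (Fin m) (Fin m) ℝ) i j) ^ 2 = 1 := by
        simp [Matrix.one_apply, apply_ite (· ^ (2:ℕ))]
      rw [this, Real.sqrt_one]
    simp only [h]
    exact ciSup_const
  have := csInf_le (gamma2_bddBelow A)
    (Set.mem_setOf.mpr ⟨m, 1, A, Matrix.one_mul A, rfl⟩)
  rw [h1, one_mul] at this
  exact this

lemma two_rpow_half_sq (y : ℝ) : ((2:ℝ) ^ (y / 2)) ^ 2 = (2:ℝ) ^ y := by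
  rw [← Real.rpow_natCast ((2:ℝ) ^ (y / 2)) 2, ← Real.rpow_mul (by norm_num)]
  norm_num

lemma sqrt_two_pow (t : ℕ) : Real.sqrt ((2:ℝ) ^ t) = (2:ℝ) ^ ((t : ℝ) / 2) := by
  rw [show ((2:ℝ) ^ t) = ((2:ℝ) ^ ((t : ℝ) / 2)) ^ 2 by
    rw [two_rpow_half_sq, Real.rpow_natCast]]
  exact Real.sqrt_sq (by positivity)

lemma colNorm12_of_sq_pow {m N : ℕ} [NeZero N] (M : Matrix (Fin m) (Fin N) ℝ)
    (h : ∀ i j, (M i j) ^ 2 = (2:ℝ) ^ (i : ℕ)) :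
    colNorm12 M = Real.sqrt ((2:ℝ) ^ m - 1) := by
  unfold colNorm12
  have hcol : ∀ j : Fin N, Real.sqrt (∑ i, (M i j) ^ 2) = Real.sqrt ((2:ℝ) ^ m - 1) := by
    intro j
    congr 1
    rw [Finset.sum_congr rfl (fun i _ => h i j),
      Fin.sum_univ_eq_sum_range (fun i => (2:ℝ) ^ i) m, geom_sum_eq (by norm_num)]
    norm_num
  simp only [hcol]
  exact ciSup_const

theorem stmt9 (n N : ℕ) (hN : N = 2 ^ n)
    (H : Matrix (Fin N) (Fin N) ℝ)
    (hent : ∀ i j, H i j = 1 ∨ H i j = -1)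
    (hHad : Hᵀ * H = (N : ℝ) • 1)
    (Q : Matrix (Fin N) (Fin N) ℝ)
    (hQ : ∀ i j, Q i j = (2 : ℝ) ^ ((i : ℝ) / 2) * H i j) :
    -- `‖q₁‖_∞ = 1`
    (⨆ j, |Q ⟨0, by rw [hN]; positivity⟩ j|) = 1 ∧
    -- `(N−1)/2 ≤ log₂ γ₂(Q) ≤ N/2`
    ((N : ℝ) - 1) / 2 ≤ Real.logb 2 (gamma2 Q) ∧ Real.logb 2 (gamma2 Q) ≤ (N : ℝ) / 2 ∧
    -- the online lower bound
    ∀ (kk : ℕ) (R : Matrix (Fin kk) (Fin N) ℝ), colNorm12 R ≤ 1 →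
      ∀ ℓ : Fin N → (Fin kk → ℝ), (∀ t, Matrix.vecMul (ℓ t) R = Q t) →
        ∃ t : Fin N,
          Real.sqrt ((N : ℝ) / 2) *
              gamma2 (Matrix.of fun (i : Fin ((t : ℕ) + 1)) (j : Fin N) =>
                Q (Fin.castLE t.isLt i) j) ≤
            Real.sqrt (∑ a, (ℓ t a) ^ 2) ∧
          Real.sqrt (Real.logb 2 (gamma2 Q)) *
              gamma2 (Matrix.of fun (i : Fin ((t : ℕ) + 1)) (j : Fin N) =>
                Q (Fin.castLE t.isLt i) j) ≤
            Real.sqrt (∑ a, (ℓ t a) ^ 2) := by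
  have hNpos : 0 < N := by rw [hN]; positivity
  haveI : NeZero N := ⟨hNpos.ne'⟩
  have hNR : (0:ℝ) < N := by exact_mod_cast hNpos
  have hH2 : ∀ i j, (H i j) ^ 2 = 1 := by
    intro i j; rcases hent i j with h | h <;> rw [h] <;> norm_num
  have hQsq : ∀ i j, (Q i j) ^ 2 = (2:ℝ) ^ (i : ℕ) := by
    intro i j
    rw [hQ, mul_pow, hH2, mul_one, two_rpow_half_sq, Real.rpow_natCast]
  -- bounds on gamma2 Q
  have hub : gamma2 Q ≤ Real.sqrt ((2:ℝ) ^ N - 1) := by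
    have := gamma2_le_colNorm12 Q
    rwa [colNorm12_of_sq_pow Q hQsq] at this
  have hlb : (2:ℝ) ^ (((N:ℝ) - 1) / 2) ≤ gamma2 Q := by
    have hlt : N - 1 < N := Nat.sub_lt hNpos one_pos
    have h := entry_le_gamma2 Q ⟨N - 1, hlt⟩ ⟨0, hNpos⟩
    have habs : |Q ⟨N - 1, hlt⟩ ⟨0, hNpos⟩| = (2:ℝ) ^ (((N:ℝ) - 1) / 2) := by
      rw [hQ, abs_mul, abs_of_pos (Real.rpow_pos_of_pos two_pos _)]
      have : |H ⟨N - 1, hlt⟩ ⟨0, hNpos⟩| = 1 := by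
        rcases hent ⟨N - 1, hlt⟩ ⟨0, hNpos⟩ with h | h <;> rw [h] <;> norm_num
      rw [this, mul_one]
      congr 2
      push_cast [Nat.cast_sub (Nat.one_le_iff_ne_zero.mpr hNpos.ne')]
      ring
    rwa [habs] at h
  have hQpos : 0 < gamma2 Q := lt_of_lt_of_le (Real.rpow_pos_of_pos two_pos _) hlb
  have hub' : gamma2 Q ≤ (2:ℝ) ^ ((N:ℝ) / 2) := by
    refine hub.trans ?_
    have : Real.sqrt ((2:ℝ) ^ N - 1) ≤ Real.sqrt ((2:ℝ) ^ N) :=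
      Real.sqrt_le_sqrt (by norm_num)
    rwa [sqrt_two_pow] at this
  have hlogub : Real.logb 2 (gamma2 Q) ≤ (N:ℝ) / 2 := by
    have := Real.logb_le_logb_of_le (b := 2) (by norm_num) hQpos hub'
    rwa [Real.logb_rpow (by norm_num) (by norm_num)] at this
  refine ⟨?_, ?_, hlogub, ?_⟩
  · -- first component
    have habs : ∀ j, |Q ⟨0, by rw [hN]; positivity⟩ j| = 1 := by
      intro j
      rw [hQ]
      have h0 : (((⟨0, by rw [hN]; positivity⟩ : Fin N) : ℕ) : ℝ) = 0 := by norm_num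
      rw [h0]
      norm_num
      rcases hent 0 j with h | h <;> simp [h]
    simp only [habs]
    exact ciSup_const
  · -- log lower bound
    have := Real.logb_le_logb_of_le (b := 2) (by norm_num)
      (Real.rpow_pos_of_pos two_pos _) hlb
    rwa [Real.logb_rpow (by norm_num) (by norm_num)] at this
  · -- the online part
    intro kk R hR ℓ hℓ
    have hcol : ∀ j, ∑ a, R a j ^ 2 ≤ 1 := by
      intro j
      have h1 : Real.sqrt (∑ a, R a j ^ 2) ≤ 1 := (col_le_colNorm12 R j).trans hR
      nlinarith [Real.sq_sqrt (show (0:ℝ) ≤ ∑ a, R a j ^ 2 by positivity),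
        Real.sqrt_nonneg (∑ a, R a j ^ 2)]
    have hQt : ∀ (t : Fin N) j, ∑ a, ℓ t a * R a j = Q t j := by
      intro t j
      have := congrFun (hℓ t) j
      simpa [Matrix.vecMul, dotProduct] using this
    set w : Fin N → Fin kk → ℝ := fun t a => ∑ j, R a j * H t j with hw_def
    have hdelta : ∀ j j' : Fin N, ∑ t, H t j * H t j' = if j = j' then (N:ℝ) else 0 := by
      intro j j'
      have h := congrFun (congrFun hHad j) j'
      rw [Matrix.mul_apply] at h
      simpa [Matrix.transpose_apply, Matrix.one_apply, mul_ite] using h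
    have hkey : ∀ a, ∑ t, (w t a) ^ 2 = N * ∑ j, R a j ^ 2 := by
      intro a
      have expand : ∀ t : Fin N, (w t a) ^ 2 =
          ∑ j, ∑ j', (R a j * R a j') * (H t j * H t j') := by
        intro t
        rw [hw_def, sq, Finset.sum_mul_sum]
        exact Finset.sum_congr rfl fun j _ => Finset.sum_congr rfl fun j' _ => by ring
      calc ∑ t, (w t a) ^ 2
          = ∑ t, ∑ j, ∑ j', (R a j * R a j') * (H t j * H t j') :=
            Finset.sum_congr rfl fun t _ => expand t
        _ = ∑ j, ∑ j', ∑ t, (R a j * R a j') * (H t j * H t j') := by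
            rw [Finset.sum_comm]
            exact Finset.sum_congr rfl fun j _ => Finset.sum_comm
        _ = ∑ j, ∑ j', (R a j * R a j') * ∑ t, H t j * H t j' := by
            simp [Finset.mul_sum]
        _ = ∑ j, R a j ^ 2 * N := by
            refine Finset.sum_congr rfl fun j _ => ?_
            simp only [hdelta, mul_ite, mul_zero]
            rw [Finset.sum_ite_eq]
            simp [sq]
        _ = N * ∑ j, R a j ^ 2 := by rw [Finset.mul_sum]; exact Finset.sum_congr rfl fun j _ => by ring
    have hex : ∃ t : Fin N, Real.sqrt N * (2:ℝ) ^ ((t : ℝ) / 2) ≤ Real.sqrt (∑ a, (ℓ t a) ^ 2) := by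
      by_contra hcon
      push_neg at hcon
      have hwlb : ∀ t : Fin N, (N:ℝ) < ∑ a, (w t a) ^ 2 := by
        intro t
        have hrow : ∑ j, (H t j) ^ 2 = (N:ℝ) := by
          simp [hH2]
        have key_eq : ∑ a, ℓ t a * w t a = (2:ℝ) ^ ((t:ℝ) / 2) * N := by
          calc ∑ a, ℓ t a * w t a
              = ∑ a, ∑ j, ℓ t a * (R a j * H t j) := by
                simp [hw_def, Finset.mul_sum]
            _ = ∑ j, ∑ a, ℓ t a * (R a j * H t j) := Finset.sum_comm
            _ = ∑ j, (∑ a, ℓ t a * R a j) * H t j := by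
                refine Finset.sum_congr rfl fun j _ => ?_
                rw [Finset.sum_mul]
                exact Finset.sum_congr rfl fun a _ => by ring
            _ = ∑ j, (2:ℝ) ^ ((t:ℝ) / 2) * (H t j * H t j) := by
                refine Finset.sum_congr rfl fun j _ => ?_
                rw [hQt, hQ]; ring
            _ = (2:ℝ) ^ ((t:ℝ) / 2) * N := by
                rw [← Finset.mul_sum]
                congr 1
                simpa [sq] using hrow
        set s := Real.sqrt (∑ a, (w t a) ^ 2) with hs_def
        have hCS : (2:ℝ) ^ ((t:ℝ) / 2) * N ≤ Real.sqrt (∑ a, (ℓ t a) ^ 2) * s := by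
          rw [← key_eq]; exact cs_sum _ _ _
        have h2t : (0:ℝ) < (2:ℝ) ^ ((t:ℝ) / 2) := Real.rpow_pos_of_pos two_pos _
        have hlnn : 0 ≤ Real.sqrt (∑ a, (ℓ t a) ^ 2) := Real.sqrt_nonneg _
        have hspos : 0 < s := by
          by_contra hsle
          push_neg at hsle
          have hs0 : s = 0 := le_antisymm hsle (Real.sqrt_nonneg _)
          rw [hs0, mul_zero] at hCS
          nlinarith
        have hlt : (2:ℝ) ^ ((t:ℝ) / 2) * N <
            (Real.sqrt N * (2:ℝ) ^ ((t:ℝ) / 2)) * s :=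
          lt_of_le_of_lt hCS (mul_lt_mul_of_pos_right (hcon t) hspos)
        have h1 : (N:ℝ) < Real.sqrt N * s := by
          have h' : (2:ℝ) ^ ((t:ℝ) / 2) * N < (2:ℝ) ^ ((t:ℝ) / 2) * (Real.sqrt N * s) := by
            nlinarith
          exact (mul_lt_mul_iff_right₀ h2t).mp h'
        have hsN : Real.sqrt N * Real.sqrt N = N := Real.mul_self_sqrt hNR.le
        have hsNpos : 0 < Real.sqrt N := Real.sqrt_pos.mpr hNR
        have h2 : Real.sqrt N < s := by nlinarith
        have h3 := Real.sq_sqrt (show (0:ℝ) ≤ ∑ a, (w t a) ^ 2 by positivity)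
        rw [← hs_def] at h3
        nlinarith
      have hstrict : ∑ t : Fin N, (N:ℝ) < ∑ t, ∑ a, (w t a) ^ 2 :=
        Finset.sum_lt_sum_of_nonempty Finset.univ_nonempty fun t _ => hwlb t
      have htot : ∑ t, ∑ a, (w t a) ^ 2 ≤ (N:ℝ) * N := by
        rw [Finset.sum_comm]
        calc ∑ a, ∑ t, (w t a) ^ 2 = ∑ a : Fin kk, (N:ℝ) * ∑ j, R a j ^ 2 :=
              Finset.sum_congr rfl fun a _ => hkey a
          _ = (N:ℝ) * ∑ j, ∑ a, R a j ^ 2 := by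
              rw [← Finset.mul_sum, Finset.sum_comm]
          _ ≤ (N:ℝ) * ∑ j : Fin N, (1:ℝ) := by
              refine mul_le_mul_of_nonneg_left ?_ hNR.le
              exact Finset.sum_le_sum fun j _ => hcol j
          _ = (N:ℝ) * N := by simp
      simp only [Finset.sum_const, Finset.card_univ, Fintype.card_fin, nsmul_eq_mul] at hstrict
      nlinarith
    obtain ⟨t, ht⟩ := hex
    set g := gamma2 (Matrix.of fun (i : Fin ((t : ℕ) + 1)) (j : Fin N) =>
      Q (Fin.castLE t.isLt i) j) with hg_def
    have hg0 : 0 ≤ g := gamma2_nonneg _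
    have hgg : g ≤ Real.sqrt ((2:ℝ) ^ ((t:ℕ) + 1) - 1) := by
      have hsq : ∀ (i : Fin ((t:ℕ) + 1)) (j : Fin N),
          ((Matrix.of fun (i : Fin ((t : ℕ) + 1)) (j : Fin N) =>
            Q (Fin.castLE t.isLt i) j) i j) ^ 2 = (2:ℝ) ^ (i : ℕ) := by
        intro i j
        simp only [Matrix.of_apply]
        rw [hQsq]
        simp
      have h := gamma2_le_colNorm12 (Matrix.of fun (i : Fin ((t : ℕ) + 1)) (j : Fin N) =>
        Q (Fin.castLE t.isLt i) j)
      rwa [colNorm12_of_sq_pow _ hsq] at h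
    have hmain : Real.sqrt ((N:ℝ) / 2) * g ≤ Real.sqrt (∑ a, (ℓ t a) ^ 2) := by
      have h1 : Real.sqrt ((N:ℝ) / 2) * g ≤
          Real.sqrt ((N:ℝ) / 2) * Real.sqrt ((2:ℝ) ^ ((t:ℕ) + 1)) :=
        mul_le_mul_of_nonneg_left
          (hgg.trans (Real.sqrt_le_sqrt (by norm_num))) (Real.sqrt_nonneg _)
      have h2 : Real.sqrt ((N:ℝ) / 2) * Real.sqrt ((2:ℝ) ^ ((t:ℕ) + 1)) =
          Real.sqrt N * (2:ℝ) ^ ((t:ℝ) / 2) := by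
        rw [← sqrt_two_pow, ← Real.sqrt_mul (by positivity : (0:ℝ) ≤ (N:ℝ) / 2),
          ← Real.sqrt_mul hNR.le]
        congr 1
        rw [pow_succ]
        ring
      rw [h2] at h1
      exact h1.trans ht
    refine ⟨t, hmain, ?_⟩
    have hs : Real.sqrt (Real.logb 2 (gamma2 Q)) ≤ Real.sqrt ((N:ℝ) / 2) :=
      Real.sqrt_le_sqrt hlogub
    exact (mul_le_mul_of_nonneg_right hs hg0).trans hmain
end

section
/- Let H be an N×N Hadamard matrix with rows h_1,…,h_N, and for t ∈ {1,…,N} let Q_t be the t×N matrix whose i-th row is q_i = 2^{(i−1)/2}·h_i. Then for every t ∈ {1,…,N}: 2^{(t−1)/2} ≤ γ2(Q_t) ≤ √(2^t − 1). -/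
open Matrix

theorem stmt11 {N : ℕ} (H : Matrix (Fin N) (Fin N) ℝ)
    (hent : ∀ i j, H i j = 1 ∨ H i j = -1)
    (hHad : Hᵀ * H = (N : ℝ) • 1)
    (t : ℕ) (ht1 : 1 ≤ t) (ht : t ≤ N) :
    (2 : ℝ) ^ (((t : ℝ) - 1) / 2) ≤
      gamma2 (Matrix.of fun (i : Fin t) (j : Fin N) =>
        (2 : ℝ) ^ ((i : ℝ) / 2) * H (Fin.castLE ht i) j) ∧
    gamma2 (Matrix.of fun (i : Fin t) (j : Fin N) =>
        (2 : ℝ) ^ ((i : ℝ) / 2) * H (Fin.castLE ht i) j) ≤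
      Real.sqrt ((2 : ℝ) ^ t - 1) := by
  have hN : 0 < N := lt_of_lt_of_le ht1 ht
  have hNe : Nonempty (Fin N) := ⟨⟨0, hN⟩⟩
  have hte : Nonempty (Fin t) := ⟨⟨0, ht1⟩⟩
  set Q : Matrix (Fin t) (Fin N) ℝ :=
    Matrix.of fun (i : Fin t) (j : Fin N) =>
      (2 : ℝ) ^ ((i : ℝ) / 2) * H (Fin.castLE ht i) j with hQdef
  have hsq : ∀ (i : Fin t) (j : Fin N), (Q i j) ^ 2 = (2 : ℝ) ^ (i : ℕ) := by
    intro i j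
    have h1 : (H (Fin.castLE ht i) j) ^ 2 = 1 := by
      rcases hent (Fin.castLE ht i) j with h | h <;> rw [h] <;> norm_num
    have h2 : ((2 : ℝ) ^ ((i : ℝ) / 2)) ^ 2 = (2 : ℝ) ^ (i : ℕ) := by
      rw [← Real.rpow_natCast ((2 : ℝ) ^ ((i : ℝ) / 2)) 2,
          ← Real.rpow_natCast 2 (i : ℕ),
          ← Real.rpow_mul (by norm_num : (0 : ℝ) ≤ 2)]
      norm_num
    simp only [hQdef, Matrix.of_apply, mul_pow, h1, h2, mul_one]
  -- the column norm of Q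
  have hcol : colNorm12 Q = Real.sqrt ((2 : ℝ) ^ t - 1) := by
    have hsum : ∀ j : Fin N, ∑ i, (Q i j) ^ 2 = (2 : ℝ) ^ t - 1 := by
      intro j
      simp only [hsq]
      rw [Fin.sum_univ_eq_sum_range (fun i => (2 : ℝ) ^ i) t,
          geom_sum_eq (by norm_num : (2 : ℝ) ≠ 1)]
      norm_num
    unfold colNorm12
    simp only [hsum]
    exact ciSup_const
  have hrow1 : rowNorm2inf (1 : Matrix (Fin t) (Fin t) ℝ) = 1 := by
    have h : ∀ i : Fin t, ∑ j, ((1 : Matrix (Fin t) (Fin t) ℝ) i j) ^ 2 = 1 := by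
      intro i
      simp [Matrix.one_apply, apply_ite (· ^ 2)]
    unfold rowNorm2inf
    simp only [h, Real.sqrt_one]
    exact ciSup_const
  set S := { c : ℝ | ∃ (k : ℕ) (L : Matrix (Fin t) (Fin k) ℝ) (R : Matrix (Fin k) (Fin N) ℝ),
    L * R = Q ∧ c = rowNorm2inf L * colNorm12 R } with hSdef
  have hmem : Real.sqrt ((2 : ℝ) ^ t - 1) ∈ S := by
    refine ⟨t, 1, Q, Matrix.one_mul Q, ?_⟩
    rw [hrow1, hcol, one_mul]
  have hbdd : BddBelow S := by
    refine ⟨0, fun c hc => ?_⟩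
    obtain ⟨k, L, R, -, rfl⟩ := hc
    exact mul_nonneg (Real.iSup_nonneg fun _ => Real.sqrt_nonneg _)
      (Real.iSup_nonneg fun _ => Real.sqrt_nonneg _)
  constructor
  · -- lower bound
    refine le_csInf ⟨_, hmem⟩ ?_
    rintro c ⟨k, L, R, hLR, rfl⟩
    set i : Fin t := ⟨t - 1, by omega⟩
    set j : Fin N := ⟨0, hN⟩
    have hval : (2 : ℝ) ^ (((t : ℝ) - 1) / 2) = |Q i j| := by
      rw [← Real.sqrt_sq_eq_abs, hsq i j]
      rw [Real.sqrt_eq_rpow, ← Real.rpow_natCast 2 (i : ℕ),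
          ← Real.rpow_mul (by norm_num : (0 : ℝ) ≤ 2)]
      congr 1
      have : ((i : ℕ) : ℝ) = (t : ℝ) - 1 := by
        simp only [i]
        push_cast [Nat.cast_sub ht1]
        ring
      rw [this]; ring
    have hcs : |Q i j| ≤ Real.sqrt (∑ x, (L i x) ^ 2) * Real.sqrt (∑ x, (R x j) ^ 2) := by
      rw [← hLR, Matrix.mul_apply, ← Real.sqrt_sq_eq_abs,
          ← Real.sqrt_mul (Finset.sum_nonneg fun _ _ => sq_nonneg _)]
      exact Real.sqrt_le_sqrt (Finset.sum_mul_sq_le_sq_mul_sq _ _ _)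
    have hL : Real.sqrt (∑ x, (L i x) ^ 2) ≤ rowNorm2inf L := by
      unfold rowNorm2inf
      exact le_ciSup (f := fun i' : Fin t => Real.sqrt (∑ x, (L i' x) ^ 2))
        (Set.Finite.bddAbove (Set.finite_range _)) i
    have hR : Real.sqrt (∑ x, (R x j) ^ 2) ≤ colNorm12 R := by
      unfold colNorm12
      exact le_ciSup (f := fun j' : Fin N => Real.sqrt (∑ x, (R x j') ^ 2))
        (Set.Finite.bddAbove (Set.finite_range _)) j
    calc (2 : ℝ) ^ (((t : ℝ) - 1) / 2) = |Q i j| := hval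
      _ ≤ Real.sqrt (∑ x, (L i x) ^ 2) * Real.sqrt (∑ x, (R x j) ^ 2) := hcs
      _ ≤ rowNorm2inf L * colNorm12 R :=
          mul_le_mul hL hR (Real.sqrt_nonneg _)
            (le_trans (Real.sqrt_nonneg _) hL)
  · exact csInf_le hbdd hmem
end

section
/- There is a universal constant K > 0 with the following property. Let γ > 0 and let Q be an m×N real matrix. Suppose that for every nonempty subset J ⊆ {1,…,N} there exist k ∈ ℕ and matrices L ∈ ℝ^{m×k}, R ∈ ℝ^{k×|J|} with L·R = Q_J, ‖L‖_{2→∞} ≤ γ, and ‖R‖_F ≤ √|J|, where Q_J is the submatrix of Q consisting of the columns indexed by J. Then γ2(Q) ≤ K·γ·√(1 + log₂(N)). -/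
open Matrix

lemma sqrt_le_of_sq {x c : ℝ} (hx : 0 ≤ x) (h : Real.sqrt x ≤ c) : x ≤ c ^ 2 := by
  calc x = Real.sqrt x ^ 2 := (Real.sq_sqrt hx).symm
    _ ≤ c ^ 2 := pow_le_pow_left₀ (Real.sqrt_nonneg _) h 2

lemma row_sq_le {α β : Type*} [Fintype α] [Fintype β] (M : Matrix α β ℝ) (i : α) {c : ℝ}
    (h : rowNorm2inf M ≤ c) : ∑ j, (M i j) ^ 2 ≤ c ^ 2 := by
  refine sqrt_le_of_sq (by positivity) (le_trans ?_ h)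
  exact le_ciSup (f := fun i => Real.sqrt (∑ j, (M i j) ^ 2))
    (Set.Finite.bddAbove (Set.finite_range _)) i

lemma gamma2_le {α β : Type*} [Fintype α] [Fintype β] (A : Matrix α β ℝ) (k : ℕ)
    (L : Matrix α (Fin k) ℝ) (R : Matrix (Fin k) β ℝ) (h : L * R = A) :
    gamma2 A ≤ rowNorm2inf L * colNorm12 R := by
  apply csInf_le
  · refine ⟨0, ?_⟩
    rintro c ⟨k', L', R', -, rfl⟩
    exact mul_nonneg (rowNorm2inf_nonneg _) (colNorm12_nonneg _)
  · exact ⟨k, L, R, h, rfl⟩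

lemma key {m N : ℕ} {γ : ℝ} (hγ : 0 < γ) (Q : Matrix (Fin m) (Fin N) ℝ)
    (hQ : ∀ J : Finset (Fin N), J.Nonempty →
        ∃ (k : ℕ) (L : Matrix (Fin m) (Fin k) ℝ) (R : Matrix (Fin k) {j // j ∈ J} ℝ),
          L * R = Matrix.of (fun i (j : {j // j ∈ J}) => Q i j) ∧
          rowNorm2inf L ≤ γ ∧ frobNorm R ≤ Real.sqrt (J.card : ℝ)) :
    ∀ (r : ℕ) (S : Finset (Fin N)), S.card ≤ 2 ^ r →
      ∃ (κ : Type) (_ : Fintype κ) (L : Matrix (Fin m) κ ℝ) (R : Matrix κ {j // j ∈ S} ℝ),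
        (∀ i j, ∑ a, L i a * R a j = Q i j.1) ∧
        (∀ i, ∑ a, (L i a) ^ 2 ≤ γ ^ 2 * (r + 1)) ∧
        (∀ j, ∑ a, (R a j) ^ 2 ≤ 2) := by
  classical
  have empty_case : ∀ (r : ℕ) (S : Finset (Fin N)), S = ∅ →
      ∃ (κ : Type) (_ : Fintype κ) (L : Matrix (Fin m) κ ℝ) (R : Matrix κ {j // j ∈ S} ℝ),
        (∀ i j, ∑ a, L i a * R a j = Q i j.1) ∧
        (∀ i, ∑ a, (L i a) ^ 2 ≤ γ ^ 2 * (r + 1)) ∧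
        (∀ j, ∑ a, (R a j) ^ 2 ≤ 2) := by
    rintro r S rfl
    refine ⟨Fin 0, inferInstance, 0, 0, ?_, ?_, ?_⟩
    · intro i j; exact absurd j.2 (Finset.notMem_empty _)
    · intro i; simp; positivity
    · intro j; exact absurd j.2 (Finset.notMem_empty _)
  -- frobenius bound unpacking
  have frob_sq : ∀ (k : ℕ) (S : Finset (Fin N)) (R : Matrix (Fin k) {j // j ∈ S} ℝ),
      frobNorm R ≤ Real.sqrt (S.card : ℝ) →
      ∑ j : {j // j ∈ S}, ∑ a, (R a j) ^ 2 ≤ (S.card : ℝ) := by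
    intro k S R hR
    have h1 : ∑ a, ∑ j, (R a j) ^ 2 ≤ (S.card : ℝ) := by
      have := sqrt_le_of_sq (x := ∑ a, ∑ j, (R a j) ^ 2) (by positivity) hR
      rwa [Real.sq_sqrt (by positivity)] at this
    calc ∑ j : {j // j ∈ S}, ∑ a, (R a j) ^ 2 = ∑ a, ∑ j, (R a j) ^ 2 := Finset.sum_comm
      _ ≤ _ := h1
  intro r
  induction r with
  | zero =>
    intro S hS
    rcases S.eq_empty_or_nonempty with rfl | hne
    · exact empty_case 0 ∅ rfl
    obtain ⟨k, L, R, hLR, hL, hR⟩ := hQ S hne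
    refine ⟨Fin k, inferInstance, L, R, ?_, ?_, ?_⟩
    · intro i j
      have := congrFun (congrFun hLR i) j
      rw [mul_apply] at this
      simpa using this
    · intro i
      have := row_sq_le L i hL
      simpa using this
    · intro j
      have h2 : ∑ a, (R a j) ^ 2 ≤ (S.card : ℝ) := by
        refine le_trans ?_ (frob_sq k S R hR)
        exact Finset.single_le_sum (f := fun j => ∑ a, (R a j) ^ 2)
          (fun _ _ => by positivity) (Finset.mem_univ j)
      have : (S.card : ℝ) ≤ 1 := by exact_mod_cast le_trans hS (by norm_num)
      linarith
  | succ r ih =>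
    intro S hS
    rcases S.eq_empty_or_nonempty with rfl | hne
    · exact empty_case _ ∅ rfl
    obtain ⟨k, L, R, hLR, hL, hR⟩ := hQ S hne
    set B : Finset {j // j ∈ S} :=
      Finset.univ.filter (fun j => ¬ (∑ a, (R a j) ^ 2 ≤ 2)) with hB
    set S' : Finset (Fin N) := B.image Subtype.val with hS'
    have hmemS' : ∀ j : {j // j ∈ S}, j.1 ∈ S' ↔ ¬ (∑ a, (R a j) ^ 2 ≤ 2) := by
      intro j
      constructor
      · intro h
        obtain ⟨j', hj', hval⟩ := Finset.mem_image.1 h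
        have : j' = j := Subtype.ext hval
        subst this
        exact (Finset.mem_filter.1 hj').2
      · intro h
        exact Finset.mem_image.2 ⟨j, Finset.mem_filter.2 ⟨Finset.mem_univ _, h⟩, rfl⟩
    have hcardS' : S'.card ≤ 2 ^ r := by
      have hcardB : (2 : ℝ) * B.card ≤ (S.card : ℝ) := by
        have h1 : (2 : ℝ) * B.card = ∑ _j ∈ B, (2 : ℝ) := by
          rw [Finset.sum_const]; push_cast; ring
        have h2 : ∑ j ∈ B, (2 : ℝ) ≤ ∑ j ∈ B, ∑ a, (R a j) ^ 2 := by
          refine Finset.sum_le_sum ?_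
          intro j hj
          have := (Finset.mem_filter.1 hj).2
          linarith [not_le.1 this]
        have h3 : ∑ j ∈ B, ∑ a, (R a j) ^ 2 ≤ ∑ j : {j // j ∈ S}, ∑ a, (R a j) ^ 2 :=
          Finset.sum_le_sum_of_subset_of_nonneg (Finset.subset_univ _)
            (fun _ _ _ => by positivity)
        linarith [frob_sq k S R hR]
      have hcard2 : S'.card = B.card := Finset.card_image_of_injective _ Subtype.val_injective
      have : (S'.card : ℝ) ≤ (2 : ℝ) ^ r := by
        rw [hcard2]
        have hS2 : (S.card : ℝ) ≤ (2 : ℝ) ^ (r + 1) := by exact_mod_cast hS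
        rw [pow_succ] at hS2
        nlinarith
      exact_mod_cast this
    obtain ⟨κ', instκ', L', R', hprod', hrow', hcol'⟩ := ih S' hcardS'
    refine ⟨Fin k ⊕ κ', inferInstance,
      (fun i => Sum.elim (L i) (L' i)),
      (fun x j => Sum.rec
        (fun a => if (∑ a, (R a j) ^ 2 ≤ 2) then R a j else 0)
        (fun b => if h : j.1 ∈ S' then R' b ⟨j.1, h⟩ else 0) x),
      ?_, ?_, ?_⟩
    · intro i j
      rw [Fintype.sum_sum_type]
      by_cases hgood : ∑ a, (R a j) ^ 2 ≤ 2
      · have hnot : j.1 ∉ S' := fun h => (hmemS' j).1 h hgood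
        simp only [Sum.elim_inl, Sum.elim_inr, if_pos hgood, dif_neg hnot, mul_zero,
          Finset.sum_const_zero, add_zero]
        have := congrFun (congrFun hLR i) j
        rw [mul_apply] at this
        simpa using this
      · have hin : j.1 ∈ S' := (hmemS' j).2 hgood
        simp only [Sum.elim_inl, Sum.elim_inr, if_neg hgood, dif_pos hin, mul_zero,
          Finset.sum_const_zero, zero_add]
        exact hprod' i ⟨j.1, hin⟩
    · intro i
      rw [Fintype.sum_sum_type]
      simp only [Sum.elim_inl, Sum.elim_inr]
      have h1 := row_sq_le L i hL
      have h2 := hrow' i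
      push_cast at h2 ⊢
      nlinarith
    · intro j
      rw [Fintype.sum_sum_type]
      by_cases hgood : ∑ a, (R a j) ^ 2 ≤ 2
      · have hnot : j.1 ∉ S' := fun h => (hmemS' j).1 h hgood
        simp only [if_pos hgood, dif_neg hnot]
        simpa using hgood
      · have hin : j.1 ∈ S' := (hmemS' j).2 hgood
        simp only [if_neg hgood, dif_pos hin]
        simpa using hcol' ⟨j.1, hin⟩

theorem stmt12 :
    ∃ K : ℝ, 0 < K ∧
    ∀ (m N : ℕ) (γ : ℝ), 0 < γ →
    ∀ Q : Matrix (Fin m) (Fin N) ℝ,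
      (∀ J : Finset (Fin N), J.Nonempty →
        ∃ (k : ℕ) (L : Matrix (Fin m) (Fin k) ℝ) (R : Matrix (Fin k) {j // j ∈ J} ℝ),
          L * R = Matrix.of (fun i (j : {j // j ∈ J}) => Q i j) ∧
          rowNorm2inf L ≤ γ ∧ frobNorm R ≤ Real.sqrt (J.card : ℝ)) →
      gamma2 Q ≤ K * γ * Real.sqrt (1 + Real.logb 2 N) := by
  refine ⟨2, by norm_num, ?_⟩
  intro m N γ hγ Q hQ
  rcases Nat.eq_zero_or_pos N with rfl | hN
  · -- N = 0 : trivial factorization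
    have h0 : gamma2 Q ≤ 0 := by
      have := gamma2_le Q 0 (0 : Matrix (Fin m) (Fin 0) ℝ) (0 : Matrix (Fin 0) (Fin 0) ℝ)
        (by ext i j; exact j.elim0)
      have hc : colNorm12 (0 : Matrix (Fin 0) (Fin 0) ℝ) = 0 := Real.iSup_of_isEmpty _
      rw [hc, mul_zero] at this
      exact this
    refine le_trans h0 ?_
    positivity
  · set r := Nat.clog 2 N with hr
    have hcard : (Finset.univ : Finset (Fin N)).card ≤ 2 ^ r := by
      simpa using Nat.le_pow_clog (by norm_num) N
    obtain ⟨κ, instκ, L, R, hprod, hrow, hcol⟩ := key hγ Q hQ r Finset.univ hcard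
    set e := (Fintype.equivFin κ).symm with he
    set L₀ : Matrix (Fin m) (Fin (Fintype.card κ)) ℝ := fun i a => L i (e a) with hL₀
    set R₀ : Matrix (Fin (Fintype.card κ)) (Fin N) ℝ :=
      fun a j => R (e a) ⟨j, Finset.mem_univ j⟩ with hR₀
    have hfac : L₀ * R₀ = Q := by
      ext i j
      rw [mul_apply]
      calc ∑ a, L₀ i a * R₀ a j
          = ∑ x : κ, L i x * R x ⟨j, Finset.mem_univ j⟩ :=
            Equiv.sum_comp e (fun x => L i x * R x ⟨j, Finset.mem_univ j⟩)
        _ = Q i j := hprod i ⟨j, Finset.mem_univ j⟩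
    have hL₀bound : rowNorm2inf L₀ ≤ γ * Real.sqrt (r + 1) := by
      refine Real.iSup_le (fun i => ?_) (by positivity)
      have hsum : ∑ a, (L₀ i a) ^ 2 = ∑ x : κ, (L i x) ^ 2 :=
        Equiv.sum_comp e (fun x => (L i x) ^ 2)
      rw [hsum]
      calc Real.sqrt (∑ x : κ, (L i x) ^ 2) ≤ Real.sqrt (γ ^ 2 * (r + 1)) :=
            Real.sqrt_le_sqrt (hrow i)
        _ = γ * Real.sqrt (r + 1) := by
            rw [Real.sqrt_mul (by positivity), Real.sqrt_sq hγ.le]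
    have hR₀bound : colNorm12 R₀ ≤ Real.sqrt 2 := by
      refine Real.iSup_le (fun j => ?_) (Real.sqrt_nonneg _)
      have hsum : ∑ a, (R₀ a j) ^ 2 = ∑ x : κ, (R x ⟨j, Finset.mem_univ j⟩) ^ 2 :=
        Equiv.sum_comp e (fun x => (R x ⟨j, Finset.mem_univ j⟩) ^ 2)
      rw [hsum]
      exact Real.sqrt_le_sqrt (hcol _)
    have hstep : gamma2 Q ≤ (γ * Real.sqrt (r + 1)) * Real.sqrt 2 := by
      refine le_trans (gamma2_le Q _ L₀ R₀ hfac) ?_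
      exact mul_le_mul hL₀bound hR₀bound (colNorm12_nonneg _) (by positivity)
    refine le_trans hstep ?_
    -- now show (γ * √(r+1)) * √2 ≤ 2 * γ * √(1 + logb 2 N)
    have hlogN : (0 : ℝ) ≤ Real.logb 2 N := by
      apply Real.logb_nonneg (by norm_num)
      exact_mod_cast hN
    have hrle : (r : ℝ) ≤ 1 + Real.logb 2 N := by
      rcases eq_or_lt_of_le (show 1 ≤ N from hN) with h1 | h2
      · have hr0 : r = 0 := by rw [hr, ← h1]; exact Nat.clog_one_right 2
        rw [hr0]; push_cast; linarith
      · have hrpos : 1 ≤ r := by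
          rw [hr]
          exact Nat.clog_pos (by norm_num) h2
        have hpow : (2 : ℕ) ^ (r - 1) < N := by
          have := Nat.pow_pred_clog_lt_self (b := 2) (by norm_num) (x := N) h2
          simpa [hr] using this
        have hpowR : (2 : ℝ) ^ (r - 1) ≤ (N : ℝ) := by exact_mod_cast hpow.le
        have : ((r - 1 : ℕ) : ℝ) ≤ Real.logb 2 N := by
          have hmono := Real.logb_le_logb_of_le (b := 2) (by norm_num) (by positivity) hpowR
          rwa [Real.logb_pow, Real.logb_self_eq_one (by norm_num), mul_one] at hmono
        have hcast : ((r - 1 : ℕ) : ℝ) = (r : ℝ) - 1 := by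
          push_cast [Nat.cast_sub hrpos]; ring
        linarith [hcast ▸ this]
    have key2 : Real.sqrt (↑r + 1) * Real.sqrt 2 ≤ 2 * Real.sqrt (1 + Real.logb 2 N) := by
      rw [← Real.sqrt_mul (by positivity)]
      have h4 : (2 : ℝ) * Real.sqrt (1 + Real.logb 2 N)
          = Real.sqrt (4 * (1 + Real.logb 2 N)) := by
        rw [show (4 : ℝ) * (1 + Real.logb 2 N) = 2 ^ 2 * (1 + Real.logb 2 N) by ring,
          Real.sqrt_mul (by positivity), Real.sqrt_sq (by norm_num)]
      rw [h4]
      apply Real.sqrt_le_sqrt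
      nlinarith
    calc γ * Real.sqrt (↑r + 1) * Real.sqrt 2
        = γ * (Real.sqrt (↑r + 1) * Real.sqrt 2) := by ring
      _ ≤ γ * (2 * Real.sqrt (1 + Real.logb 2 N)) := by
          exact mul_le_mul_of_nonneg_left key2 hγ.le
      _ = 2 * γ * Real.sqrt (1 + Real.logb 2 N) := by ring
end

section
/- For every matrix Q ∈ [0,1]^{m×N} and all positive integers c and w with c·w ≤ N: hdisc*(Q, c·w) ≤ c·hdisc*(Q, w). -/
open Matrix

/-- The discrepancy of the columns of `Q` indexed by `S`: the minimum over ±1 colorings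
of `S` of `‖Q_S x‖_∞`. -/
noncomputable def colDisc {m : ℕ} {β : Type*} [Fintype β] (Q : Matrix (Fin m) β ℝ)
    (S : Finset β) : ℝ :=
  sInf { v : ℝ | ∃ x : β → ℝ, (∀ j ∈ S, x j = 1 ∨ x j = -1) ∧
    v = ⨆ i, |∑ j ∈ S, Q i j * x j| }

/-- The restricted hereditary discrepancy `hdisc(Q, w)`. -/
noncomputable def hdisc {m : ℕ} {β : Type*} [Fintype β] (Q : Matrix (Fin m) β ℝ)
    (w : ℕ) : ℝ :=
  sSup { v : ℝ | ∃ S : Finset β, S.card ≤ w ∧ v = colDisc Q S }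

/-- `Q*`: the matrix `Q` with an all-ones row appended. -/
noncomputable def starMatrix {m : ℕ} {β : Type*} [Fintype β] (Q : Matrix (Fin m) β ℝ) :
    Matrix (Fin (m + 1)) β ℝ :=
  Matrix.of fun i j => if h : (i : ℕ) < m then Q ⟨i, h⟩ j else 1

/-- The modified restricted hereditary discrepancy `hdisc*(Q, w)`. -/
noncomputable def hdiscStar {m : ℕ} {β : Type*} [Fintype β] (Q : Matrix (Fin m) β ℝ)
    (w : ℕ) : ℝ :=
  hdisc (starMatrix Q) w

section Aux

variable {m : ℕ} {β : Type*} [Fintype β]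

lemma colDisc_set_nonempty (Q : Matrix (Fin m) β ℝ) (S : Finset β) :
    { v : ℝ | ∃ x : β → ℝ, (∀ j ∈ S, x j = 1 ∨ x j = -1) ∧
      v = ⨆ i, |∑ j ∈ S, Q i j * x j| }.Nonempty :=
  ⟨_, fun _ => 1, fun _ _ => Or.inl rfl, rfl⟩

lemma colDisc_set_bddBelow (Q : Matrix (Fin m) β ℝ) (S : Finset β) :
    BddBelow { v : ℝ | ∃ x : β → ℝ, (∀ j ∈ S, x j = 1 ∨ x j = -1) ∧
      v = ⨆ i, |∑ j ∈ S, Q i j * x j| } := by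
  refine ⟨0, ?_⟩
  rintro v ⟨x, hx, rfl⟩
  exact Real.iSup_nonneg fun i => abs_nonneg _

lemma colDisc_nonneg (Q : Matrix (Fin m) β ℝ) (S : Finset β) :
    0 ≤ colDisc Q S := by
  apply Real.sInf_nonneg
  rintro v ⟨x, hx, rfl⟩
  exact Real.iSup_nonneg fun i => abs_nonneg _

lemma colDisc_le (Q : Matrix (Fin m) β ℝ) (S : Finset β) {x : β → ℝ}
    (hx : ∀ j ∈ S, x j = 1 ∨ x j = -1) :
    colDisc Q S ≤ ⨆ i, |∑ j ∈ S, Q i j * x j| :=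
  csInf_le (colDisc_set_bddBelow Q S) ⟨x, hx, rfl⟩

lemma colDisc_union_le (Q : Matrix (Fin (m + 1)) β ℝ) {T T' : Finset β}
    (hd : Disjoint T T') [DecidableEq β] :
    colDisc Q (T ∪ T') ≤ colDisc Q T + colDisc Q T' := by
  refine le_of_forall_pos_le_add fun ε hε => ?_
  obtain ⟨a, ⟨x, hx, rfl⟩, ha⟩ :=
    Real.lt_sInf_add_pos (colDisc_set_nonempty Q T) (half_pos hε)
  obtain ⟨b, ⟨x', hx', rfl⟩, hb⟩ :=
    Real.lt_sInf_add_pos (colDisc_set_nonempty Q T') (half_pos hε)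
  set y : β → ℝ := fun j => if j ∈ T then x j else x' j with hy_def
  have hy : ∀ j ∈ T ∪ T', y j = 1 ∨ y j = -1 := by
    intro j hj
    by_cases hjT : j ∈ T
    · simpa [hy_def, hjT] using hx j hjT
    · have hjT' : j ∈ T' := (Finset.mem_union.1 hj).resolve_left hjT
      simpa [hy_def, hjT] using hx' j hjT'
  calc colDisc Q (T ∪ T') ≤ ⨆ i, |∑ j ∈ T ∪ T', Q i j * y j| := colDisc_le Q _ hy
    _ ≤ (⨆ i, |∑ j ∈ T, Q i j * x j|) + ⨆ i, |∑ j ∈ T', Q i j * x' j| := by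
        apply ciSup_le
        intro i
        have hsum : ∑ j ∈ T ∪ T', Q i j * y j
            = (∑ j ∈ T, Q i j * x j) + ∑ j ∈ T', Q i j * x' j := by
          rw [Finset.sum_union hd]
          congr 1
          · exact Finset.sum_congr rfl fun j hj => by simp [hy_def, hj]
          · refine Finset.sum_congr rfl fun j hj => ?_
            have hjT : j ∉ T := fun hT => Finset.disjoint_left.1 hd hT hj
            simp [hy_def, hjT]
        rw [hsum]
        refine (abs_add_le _ _).trans (add_le_add ?_ ?_)
        · exact le_ciSup (f := fun i => |∑ j ∈ T, Q i j * x j|)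
            (Set.finite_range _).bddAbove i
        · exact le_ciSup (f := fun i => |∑ j ∈ T', Q i j * x' j|)
            (Set.finite_range _).bddAbove i
    _ ≤ (colDisc Q T + ε / 2) + (colDisc Q T' + ε / 2) := add_le_add ha.le hb.le
    _ = colDisc Q T + colDisc Q T' + ε := by ring

end Aux

theorem stmt13 {m N : ℕ} (Q : Matrix (Fin m) (Fin N) ℝ)
    (hQ : ∀ i j, Q i j ∈ Set.Icc (0 : ℝ) 1)
    (c w : ℕ) (hc : 1 ≤ c) (hw : 1 ≤ w) (hcw : c * w ≤ N) :
    hdiscStar Q (c * w) ≤ (c : ℝ) * hdiscStar Q w := by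
  set h := hdiscStar Q w with hh
  have hbdd : BddAbove {v : ℝ | ∃ S : Finset (Fin N), S.card ≤ w ∧
      v = colDisc (starMatrix Q) S} := by
    refine ⟨N, ?_⟩
    rintro v ⟨S, hS, rfl⟩
    have h1 : colDisc (starMatrix Q) S
        ≤ ⨆ i, |∑ j ∈ S, starMatrix Q i j * (1 : ℝ)| :=
      colDisc_le _ _ (x := fun _ => (1 : ℝ)) fun _ _ => Or.inl rfl
    refine h1.trans ?_
    apply ciSup_le
    intro i
    calc |∑ j ∈ S, starMatrix Q i j * 1| ≤ ∑ j ∈ S, |starMatrix Q i j * 1| :=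
        Finset.abs_sum_le_sum_abs _ _
      _ ≤ ∑ j ∈ S, 1 := by
        refine Finset.sum_le_sum fun j _ => ?_
        rw [mul_one, abs_le]
        unfold starMatrix
        simp only [Matrix.of_apply]
        split_ifs with hi
        · obtain ⟨h0, h1⟩ := hQ ⟨i, hi⟩ j
          constructor <;> linarith
        · norm_num
      _ = S.card := by simp
      _ ≤ N := by
        have := Finset.card_le_univ S
        simpa using this
  have h0 : 0 ≤ h := by
    apply Real.sSup_nonneg
    rintro v ⟨S, _, rfl⟩
    exact colDisc_nonneg _ _
  have key : ∀ c : ℕ, ∀ S : Finset (Fin N), S.card ≤ c * w →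
      colDisc (starMatrix Q) S ≤ (c : ℝ) * h := by
    intro c
    induction c with
    | zero =>
      intro S hS
      simp only [Nat.zero_mul, Nat.le_zero, Finset.card_eq_zero] at hS
      subst hS
      have := colDisc_le (starMatrix Q) (∅ : Finset (Fin N)) (x := fun _ => (1 : ℝ))
        (fun j hj => Or.inl rfl)
      simpa using this
    | succ c ih =>
      intro S hS
      obtain ⟨T, hTS, hTcard⟩ := Finset.exists_subset_card_eq
        (min_le_right w S.card)
      have hsplit : T ∪ (S \ T) = S := Finset.union_sdiff_of_subset hTS
      have hdisj : Disjoint T (S \ T) := Finset.disjoint_sdiff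
      have hT1 : colDisc (starMatrix Q) T ≤ h := by
        apply le_csSup hbdd
        exact ⟨T, by rw [hTcard]; exact min_le_left _ _, rfl⟩
      have hT2 : colDisc (starMatrix Q) (S \ T) ≤ (c : ℝ) * h := by
        apply ih
        rw [Finset.card_sdiff_of_subset hTS, hTcard]
        rcases le_total w S.card with hle | hle
        · rw [min_eq_left hle]
          rw [Nat.succ_mul] at hS
          omega
        · rw [min_eq_right hle]
          simp
      calc colDisc (starMatrix Q) S = colDisc (starMatrix Q) (T ∪ (S \ T)) := by
            rw [hsplit]
        _ ≤ colDisc (starMatrix Q) T + colDisc (starMatrix Q) (S \ T) :=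
            colDisc_union_le _ hdisj
        _ ≤ h + (c : ℝ) * h := add_le_add hT1 hT2
        _ = ((c + 1 : ℕ) : ℝ) * h := by push_cast; ring
  show hdisc (starMatrix Q) (c * w) ≤ (c : ℝ) * h
  refine Real.sSup_le ?_ (mul_nonneg (Nat.cast_nonneg c) h0)
  rintro v ⟨S, hS, rfl⟩
  exact key c S hS
end

section
/- For every α ∈ (0,1), every m ≥ 1, every finite universe U, every tuple Q = (q_1,…,q_m) of statistical queries on U, every n ∈ ℕ with n ≥ 1, and every dataset x ∈ U^n, there exist a positive integer s ≤ ⌈ln(2m)/(2α²)⌉ + 1 and a dataset y ∈ U^s such that max_{i∈{1,…,m}} |q_i(x) − q_i(y)| ≤ α. -/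
open Real Finset

private lemma hoeff_mgf {μ : ℝ} (hμ0 : 0 ≤ μ) (hμ1 : μ ≤ 1) {t : ℝ} (ht : 0 ≤ t) :
    1 - μ + μ * Real.exp t ≤ Real.exp (μ * t + t ^ 2 / 8) := by
  set D : ℝ → ℝ := fun u => 1 - μ + μ * Real.exp u with hDdef
  have hDpos : ∀ u, 0 ≤ u → 0 < D u := by
    intro u hu
    have h1 := Real.one_le_exp hu
    have h2 := mul_nonneg hμ0 (sub_nonneg.2 h1)
    simp only [hDdef]
    nlinarith
  set f : ℝ → ℝ := fun u => μ * u + u ^ 2 / 8 - Real.log (D u) with hfdef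
  set f1 : ℝ → ℝ := fun u => μ + u / 4 - μ * Real.exp u / D u with hf1def
  have hD' : ∀ u : ℝ, HasDerivAt D (μ * Real.exp u) u := by
    intro u
    exact ((Real.hasDerivAt_exp u).const_mul μ).const_add (1 - μ)
  have hpoly : ∀ u : ℝ, HasDerivAt (fun v : ℝ => μ * v + v ^ 2 / 8) (μ + u / 4) u := by
    intro u
    have h1 : HasDerivAt (fun v : ℝ => μ * v) μ u := by
      simpa using (hasDerivAt_id u).const_mul μ
    have h2 : HasDerivAt (fun v : ℝ => v ^ 2 / 8) (u / 4) u := by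
      have := (hasDerivAt_pow 2 u).div_const 8
      refine this.congr_deriv ?_
      push_cast
      ring
    exact h1.add h2
  have hf' : ∀ u, 0 ≤ u → HasDerivAt f (f1 u) u := by
    intro u hu
    have hlog : HasDerivAt (fun v => Real.log (D v)) (μ * Real.exp u / D u) u :=
      (hD' u).log (ne_of_gt (hDpos u hu))
    exact (hpoly u).sub hlog
  have hf1' : ∀ u, 0 ≤ u → HasDerivAt f1
      (1 / 4 - (μ * Real.exp u * D u - μ * Real.exp u * (μ * Real.exp u)) / (D u) ^ 2) u := by
    intro u hu
    have hq : HasDerivAt (fun v => μ * Real.exp v / D v)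
        ((μ * Real.exp u * D u - μ * Real.exp u * (μ * Real.exp u)) / (D u) ^ 2) u :=
      ((Real.hasDerivAt_exp u).const_mul μ).div (hD' u) (ne_of_gt (hDpos u hu))
    have h3 : HasDerivAt (fun v : ℝ => μ + v / 4) (1 / 4) u := by
      simpa using ((hasDerivAt_id u).div_const 4).const_add μ
    exact h3.sub hq
  have hf1nonneg : ∀ u, 0 ≤ u →
      0 ≤ 1 / 4 - (μ * Real.exp u * D u - μ * Real.exp u * (μ * Real.exp u)) / (D u) ^ 2 := by
    intro u hu
    have hd := hDpos u hu
    rw [sub_nonneg, div_le_iff₀ (by positivity)]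
    nlinarith [sq_nonneg (D u / 2 - μ * Real.exp u)]
  have hmono1 : MonotoneOn f1 (Set.Ici (0:ℝ)) := by
    apply monotoneOn_of_deriv_nonneg (convex_Ici 0)
    · exact fun u hu => (hf1' u hu).continuousAt.continuousWithinAt
    · intro u hu
      rw [interior_Ici] at hu
      exact ((hf1' u (le_of_lt hu)).differentiableAt).differentiableWithinAt
    · intro u hu
      rw [interior_Ici] at hu
      rw [(hf1' u (le_of_lt hu)).deriv]
      exact hf1nonneg u (le_of_lt hu)
  have hf1zero : f1 0 = 0 := by
    simp [hf1def, hDdef]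
  have hf1pos : ∀ u, 0 ≤ u → 0 ≤ f1 u := by
    intro u hu
    have := hmono1 (Set.self_mem_Ici) hu hu
    rw [hf1zero] at this
    exact this
  have hmono : MonotoneOn f (Set.Ici (0:ℝ)) := by
    apply monotoneOn_of_deriv_nonneg (convex_Ici 0)
    · exact fun u hu => (hf' u hu).continuousAt.continuousWithinAt
    · intro u hu
      rw [interior_Ici] at hu
      exact ((hf' u (le_of_lt hu)).differentiableAt).differentiableWithinAt
    · intro u hu
      rw [interior_Ici] at hu
      rw [(hf' u (le_of_lt hu)).deriv]
      exact hf1pos u (le_of_lt hu)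
  have hfzero : f 0 = 0 := by
    simp [hfdef, hDdef]
  have hft : 0 ≤ f t := by
    have := hmono (Set.self_mem_Ici) ht ht
    rw [hfzero] at this
    exact this
  have hlog : Real.log (D t) ≤ μ * t + t ^ 2 / 8 := by
    simp only [hfdef] at hft
    linarith
  exact (Real.log_le_iff_le_exp (hDpos t ht)).1 hlog

private lemma tail_count (n s : ℕ) (hn : 1 ≤ n) (f : Fin n → ℝ)
    (hf : ∀ a, f a ∈ Set.Icc (0:ℝ) 1) {α : ℝ} (hα : 0 < α)
    [DecidablePred fun ω : Fin s → Fin n =>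
      (∑ a, f a) / n * s + s * α ≤ ∑ j, f (ω j)] :
    ((Finset.univ.filter (fun ω : Fin s → Fin n =>
        (∑ a, f a) / n * s + s * α ≤ ∑ j, f (ω j))).card : ℝ)
      ≤ (n:ℝ) ^ s * Real.exp (-(2 * s * α ^ 2)) := by
  classical
  have hnpos : (0:ℝ) < n := by exact_mod_cast hn
  set t := 4 * α with htdef
  have ht : 0 < t := by positivity
  set μ := (∑ a, f a) / n with hμdef
  have hμ0 : 0 ≤ μ := div_nonneg (Finset.sum_nonneg fun a _ => (hf a).1) hnpos.le
  have hμ1 : μ ≤ 1 := by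
    rw [hμdef, div_le_one hnpos]
    calc ∑ a, f a ≤ ∑ _a : Fin n, (1:ℝ) := Finset.sum_le_sum fun a _ => (hf a).2
    _ = n := by simp
  have hprod : ∑ ω : Fin s → Fin n, Real.exp (t * ∑ j, f (ω j))
      = (∑ a, Real.exp (t * f a)) ^ s := by
    have h1 : ∀ ω : Fin s → Fin n,
        Real.exp (t * ∑ j, f (ω j)) = ∏ j, Real.exp (t * f (ω j)) := by
      intro ω
      rw [Finset.mul_sum, Real.exp_sum]
    simp_rw [h1]
    have h2 := Finset.prod_univ_sum (fun _ : Fin s => (Finset.univ : Finset (Fin n)))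
      (fun _ a => Real.exp (t * f a))
    rw [Fintype.piFinset_univ] at h2
    rw [← h2]
    simp [Finset.prod_const]
  have hpt : ∀ a, Real.exp (t * f a) ≤ 1 - f a + f a * Real.exp t := by
    intro a
    have h := convexOn_exp.2 (Set.mem_univ (0:ℝ)) (Set.mem_univ t)
      (sub_nonneg.2 (hf a).2) (hf a).1 (by ring)
    simp only [smul_eq_mul, mul_zero, Real.exp_zero, mul_one, zero_add] at h
    calc Real.exp (t * f a) = Real.exp (f a * t) := by rw [mul_comm]
    _ ≤ 1 - f a + f a * Real.exp t := by linarith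
  have hS : (∑ a, Real.exp (t * f a)) ≤ n * Real.exp (μ * t + t ^ 2 / 8) := by
    have hsum : ∑ a, (1 - f a + f a * Real.exp t) = n * (1 - μ + μ * Real.exp t) := by
      rw [hμdef]
      rw [Finset.sum_add_distrib, Finset.sum_sub_distrib, ← Finset.sum_mul]
      field_simp
      simp
    calc ∑ a, Real.exp (t * f a) ≤ ∑ a, (1 - f a + f a * Real.exp t) :=
          Finset.sum_le_sum fun a _ => hpt a
    _ = n * (1 - μ + μ * Real.exp t) := hsum
    _ ≤ n * Real.exp (μ * t + t ^ 2 / 8) := by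
          have := hoeff_mgf hμ0 hμ1 ht.le
          nlinarith
  set Bad := Finset.univ.filter (fun ω : Fin s → Fin n => μ * s + s * α ≤ ∑ j, f (ω j))
    with hBdef
  have hlower : (Bad.card : ℝ) * Real.exp (t * (μ * s + s * α))
      ≤ ∑ ω : Fin s → Fin n, Real.exp (t * ∑ j, f (ω j)) := by
    calc (Bad.card : ℝ) * Real.exp (t * (μ * s + s * α))
        = ∑ _ω ∈ Bad, Real.exp (t * (μ * s + s * α)) := by
          rw [Finset.sum_const, nsmul_eq_mul]
    _ ≤ ∑ ω ∈ Bad, Real.exp (t * ∑ j, f (ω j)) := by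
        refine Finset.sum_le_sum fun ω hω => ?_
        have hmem := (Finset.mem_filter.1 hω).2
        exact Real.exp_le_exp.2 (by nlinarith)
    _ ≤ ∑ ω : Fin s → Fin n, Real.exp (t * ∑ j, f (ω j)) :=
        Finset.sum_le_sum_of_subset_of_nonneg (Finset.filter_subset _ _)
          (fun _ _ _ => (Real.exp_pos _).le)
  have hcomb : (Bad.card : ℝ) * Real.exp (t * (μ * s + s * α))
      ≤ ((n:ℝ) * Real.exp (μ * t + t ^ 2 / 8)) ^ s := by
    refine hlower.trans ?_
    rw [hprod]
    exact pow_le_pow_left₀ (Finset.sum_nonneg fun a _ => (Real.exp_pos _).le) hS s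
  have hexp : ((n:ℝ) * Real.exp (μ * t + t ^ 2 / 8)) ^ s
      = (n:ℝ) ^ s * Real.exp (-(2 * s * α ^ 2)) * Real.exp (t * (μ * s + s * α)) := by
    rw [mul_pow, ← Real.exp_nat_mul, mul_assoc, ← Real.exp_add]
    congr 1
    rw [htdef]
    ring
  rw [hexp] at hcomb
  have final : (Bad.card : ℝ) ≤ (n:ℝ) ^ s * Real.exp (-(2 * s * α ^ 2)) :=
    le_of_mul_le_mul_right hcomb (Real.exp_pos _)
  convert final using 4

theorem stmt14 (α : ℝ) (hα : α ∈ Set.Ioo (0 : ℝ) 1) (m : ℕ) (hm : 1 ≤ m)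
    (U : Type) [Fintype U] (q : Fin m → U → ℝ)
    (hq : ∀ i u, q i u ∈ Set.Icc (0 : ℝ) 1)
    (n : ℕ) (hn : 1 ≤ n) (x : Fin n → U) :
    ∃ s : ℕ, 1 ≤ s ∧ s ≤ ⌈Real.log (2 * m) / (2 * α ^ 2)⌉₊ + 1 ∧
      ∃ y : Fin s → U,
        ∀ i, |(∑ a, q i (x a)) / n - (∑ b, q i (y b)) / s| ≤ α := by
  classical
  obtain ⟨hα0, hα1⟩ := hα
  have hnpos : (0:ℝ) < n := by exact_mod_cast hn
  have hmpos : (0:ℝ) < 2 * m := by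
    have : (1:ℝ) ≤ m := by exact_mod_cast hm
    linarith
  set L := Real.log (2 * m) / (2 * α ^ 2) with hLdef
  set s := ⌈L⌉₊ + 1 with hsdef
  have hspos : (0:ℝ) < s := by positivity
  refine ⟨s, Nat.le_add_left 1 _, le_refl _, ?_⟩
  have hsL : L < (s:ℝ) := by
    have h1 := Nat.le_ceil L
    have h2 : ((⌈L⌉₊ : ℝ)) < s := by
      rw [hsdef]; push_cast; linarith
    linarith
  have hkey : Real.log (2 * m) < 2 * s * α ^ 2 := by
    have h2α : (0:ℝ) < 2 * α ^ 2 := by positivity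
    have := (div_lt_iff₀ h2α).1 hsL
    linarith [this]
  have hsmall : 2 * (m:ℝ) * Real.exp (-(2 * s * α ^ 2)) < 1 := by
    have hE : Real.exp (Real.log (2 * m)) = 2 * m := Real.exp_log hmpos
    calc 2 * (m:ℝ) * Real.exp (-(2 * s * α ^ 2))
        = Real.exp (Real.log (2 * m) + -(2 * s * α ^ 2)) := by
          rw [Real.exp_add, hE]
    _ < 1 := Real.exp_lt_one_iff.2 (by linarith)
  -- bad sets
  set μ : Fin m → ℝ := fun i => (∑ a, q i (x a)) / n with hμdef
  set BadP : Fin m → Finset (Fin s → Fin n) := fun i =>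
    Finset.univ.filter (fun ω => (∑ a, q i (x a)) / n * s + s * α ≤ ∑ j, q i (x (ω j)))
    with hBPdef
  set BadM : Fin m → Finset (Fin s → Fin n) := fun i =>
    Finset.univ.filter (fun ω =>
      (∑ a, (1 - q i (x a))) / n * s + s * α ≤ ∑ j, (1 - q i (x (ω j))))
    with hBMdef
  have hBP : ∀ i, ((BadP i).card : ℝ) ≤ (n:ℝ) ^ s * Real.exp (-(2 * s * α ^ 2)) := by
    intro i
    exact tail_count n s hn (fun a => q i (x a)) (fun a => hq i (x a)) hα0
  have hBM : ∀ i, ((BadM i).card : ℝ) ≤ (n:ℝ) ^ s * Real.exp (-(2 * s * α ^ 2)) := by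
    intro i
    refine tail_count n s hn (fun a => 1 - q i (x a)) (fun a => ?_) hα0
    constructor
    · show (0:ℝ) ≤ 1 - q i (x a)
      linarith [(hq i (x a)).2]
    · show 1 - q i (x a) ≤ 1
      linarith [(hq i (x a)).1]
  set Bad : Finset (Fin s → Fin n) := Finset.univ.filter (fun ω =>
    ¬ ∀ i, |(∑ a, q i (x a)) / n - (∑ j, q i (x (ω j))) / s| ≤ α) with hBaddef
  have hsub : Bad ⊆ Finset.univ.biUnion (fun i => BadP i ∪ BadM i) := by
    intro ω hω
    rw [hBaddef, Finset.mem_filter] at hω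
    push_neg at hω
    obtain ⟨i, hi⟩ := hω.2
    rw [Finset.mem_biUnion]
    refine ⟨i, Finset.mem_univ _, ?_⟩
    rw [Finset.mem_union]
    rcases lt_abs.1 hi with h | h
    · -- μ - ν > α : BadM
      right
      rw [hBMdef, Finset.mem_filter]
      refine ⟨Finset.mem_univ _, ?_⟩
      have hsum1 : ∑ a, (1 - q i (x a)) = n - ∑ a, q i (x a) := by
        rw [Finset.sum_sub_distrib]; simp
      have hsum2 : ∑ j, (1 - q i (x (ω j))) = s - ∑ j, q i (x (ω j)) := by
        rw [Finset.sum_sub_distrib]; simp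
      rw [hsum1, hsum2]
      have h2 : α * s < ((∑ a, q i (x a)) / n - (∑ j, q i (x (ω j))) / s) * s :=
        mul_lt_mul_of_pos_right h hspos
      have h3 : ((∑ j, q i (x (ω j))) / s) * s = ∑ j, q i (x (ω j)) := by
        field_simp
      have hdiv : ((n:ℝ) - ∑ a, q i (x a)) / ↑n * ↑s
          = (s:ℝ) - (∑ a, q i (x a)) / n * s := by
        field_simp
      rw [hdiv]
      nlinarith [h2, h3]
    · -- ν - μ > α : BadP
      left
      rw [hBPdef, Finset.mem_filter]
      refine ⟨Finset.mem_univ _, ?_⟩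
      have h' : α < (∑ j, q i (x (ω j))) / s - (∑ a, q i (x a)) / n := by linarith
      have h2 : α * s < ((∑ j, q i (x (ω j))) / s - (∑ a, q i (x a)) / n) * s :=
        mul_lt_mul_of_pos_right h' hspos
      have h3 : ((∑ j, q i (x (ω j))) / s) * s = ∑ j, q i (x (ω j)) := by
        field_simp
      nlinarith [h2, h3]
  have hcard : (Bad.card : ℝ) < (n:ℝ) ^ s := by
    have h1 : (Bad.card : ℕ) ≤ ∑ i : Fin m, ((BadP i ∪ BadM i).card) :=
      le_trans (Finset.card_le_card hsub) Finset.card_biUnion_le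
    have h2 : (Bad.card : ℝ) ≤ ∑ i : Fin m, (((BadP i).card : ℝ) + ((BadM i).card : ℝ)) := by
      have h3 : (Bad.card : ℝ) ≤ ∑ i : Fin m, (((BadP i ∪ BadM i).card : ℕ) : ℝ) := by
        exact_mod_cast h1
      refine h3.trans (Finset.sum_le_sum fun i _ => ?_)
      exact_mod_cast Finset.card_union_le _ _
    have h4 : ∑ i : Fin m, (((BadP i).card : ℝ) + ((BadM i).card : ℝ))
        ≤ 2 * m * ((n:ℝ) ^ s * Real.exp (-(2 * s * α ^ 2))) := by
      calc ∑ i : Fin m, (((BadP i).card : ℝ) + ((BadM i).card : ℝ))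
          ≤ ∑ _i : Fin m, (2 * ((n:ℝ) ^ s * Real.exp (-(2 * s * α ^ 2)))) := by
            refine Finset.sum_le_sum fun i _ => ?_
            have := hBP i
            have := hBM i
            linarith
      _ = 2 * m * ((n:ℝ) ^ s * Real.exp (-(2 * s * α ^ 2))) := by
            rw [Finset.sum_const]
            simp
            ring
    have hpow : (0:ℝ) < (n:ℝ) ^ s := by positivity
    calc (Bad.card : ℝ) ≤ 2 * m * ((n:ℝ) ^ s * Real.exp (-(2 * s * α ^ 2))) := h2.trans h4
    _ = (n:ℝ) ^ s * (2 * m * Real.exp (-(2 * s * α ^ 2))) := by ring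
    _ < (n:ℝ) ^ s * 1 := by
        exact mul_lt_mul_of_pos_left hsmall hpow
    _ = (n:ℝ) ^ s := by ring
  have hBadne : Bad ≠ Finset.univ := by
    intro hEq
    have : (Bad.card : ℝ) = (n:ℝ) ^ s := by
      rw [hEq, Finset.card_univ]
      simp [Fintype.card_fun]
    rw [this] at hcard
    exact lt_irrefl _ hcard
  obtain ⟨ω, hωnot⟩ : ∃ ω, ω ∉ Bad := by
    by_contra hc
    push_neg at hc
    exact hBadne (Finset.eq_univ_of_forall hc)
  rw [hBaddef, Finset.mem_filter, not_and] at hωnot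
  have hgood := not_not.1 (hωnot (Finset.mem_univ ω))
  exact ⟨fun b => x (ω b), hgood⟩
end

section
/- Let α ∈ (0,1), let U be a finite universe of size N, let Q = (q_1,…,q_m) be a tuple of statistical queries on U with query matrix Q ∈ [0,1]^{m×N}, and let n be a positive integer with n ≤ N such that hdisc*(Q, n) ≤ αn/4. Then for every dataset x ∈ U^n whose n elements are pairwise distinct, there exist a positive integer s ≤ 5·hdisc*(Q, n)/α and a dataset y ∈ U^s such that ‖Q(x) − Q(y)‖_∞ ≤ α. -/
open Matrix

section Aux
variable {U : Type} [Fintype U] {k : ℕ}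

lemma colDisc_exists (Q : Matrix (Fin k) U ℝ) (S : Finset U) :
    ∃ χ : U → ℝ, (∀ j ∈ S, χ j = 1 ∨ χ j = -1) ∧
      (⨆ i, |∑ j ∈ S, Q i j * χ j|) = colDisc Q S := by
  classical
  set G : (U → Bool) → ℝ := fun b => ⨆ i, |∑ j ∈ S, Q i j * (if b j then (1:ℝ) else -1)|
    with hG
  have hset : {v : ℝ | ∃ x : U → ℝ, (∀ j ∈ S, x j = 1 ∨ x j = -1) ∧
      v = ⨆ i, |∑ j ∈ S, Q i j * x j|} = Set.range G := by
    ext v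
    constructor
    · rintro ⟨x, hx, rfl⟩
      refine ⟨fun j => if x j = 1 then true else false, ?_⟩
      simp only [hG]
      congr 1
      funext i
      congr 1
      refine Finset.sum_congr rfl fun j hj => ?_
      rcases hx j hj with h | h <;> simp [h] <;> norm_num
    · rintro ⟨b, rfl⟩
      exact ⟨fun j => if b j then 1 else -1,
        fun j hj => by by_cases h : b j <;> simp [h], rfl⟩
  have hmem : colDisc Q S ∈ Set.range G := by
    rw [colDisc, hset]
    exact (Set.range_nonempty G).csInf_mem (Set.finite_range G)
  obtain ⟨b, hb⟩ := hmem
  exact ⟨fun j => if b j then 1 else -1,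
    fun j hj => by by_cases h : b j <;> simp [h], hb⟩

lemma colDisc_le_card (Q : Matrix (Fin k) U ℝ) (hQ : ∀ i j, |Q i j| ≤ 1) (S : Finset U) :
    colDisc Q S ≤ (Fintype.card U : ℝ) := by
  have hbdd : BddBelow {v : ℝ | ∃ x : U → ℝ, (∀ j ∈ S, x j = 1 ∨ x j = -1) ∧
      v = ⨆ i, |∑ j ∈ S, Q i j * x j|} := by
    refine ⟨0, ?_⟩
    rintro v ⟨x, hx, rfl⟩
    exact Real.iSup_nonneg fun i => abs_nonneg _
  have hmem : (⨆ i, |∑ j ∈ S, Q i j * (1:ℝ)|) ∈ {v : ℝ | ∃ x : U → ℝ,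
      (∀ j ∈ S, x j = 1 ∨ x j = -1) ∧ v = ⨆ i, |∑ j ∈ S, Q i j * x j|} :=
    ⟨fun _ => 1, fun j _ => Or.inl rfl, rfl⟩
  refine le_trans (csInf_le hbdd hmem) ?_
  refine Real.iSup_le (fun i => ?_) (Nat.cast_nonneg _)
  calc |∑ j ∈ S, Q i j * (1:ℝ)| ≤ ∑ j ∈ S, |Q i j * 1| := Finset.abs_sum_le_sum_abs _ _
    _ ≤ ∑ j ∈ S, 1 := Finset.sum_le_sum fun j _ => by rw [mul_one]; exact hQ i j
    _ = (S.card : ℝ) := by simp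
    _ ≤ (Fintype.card U : ℝ) := by exact_mod_cast Finset.card_le_univ S

lemma colDisc_le_hdisc (Q : Matrix (Fin k) U ℝ) (hQ : ∀ i j, |Q i j| ≤ 1) (w : ℕ)
    (S : Finset U) (hS : S.card ≤ w) : colDisc Q S ≤ hdisc Q w := by
  refine le_csSup ⟨(Fintype.card U : ℝ), ?_⟩ ⟨S, hS, rfl⟩
  rintro v ⟨T, -, rfl⟩
  exact colDisc_le_card Q hQ T

end Aux

section Main
variable {U : Type} [Fintype U] {m : ℕ}

lemma arith (H k t t' A A' : ℝ) (hk : t + t' = k) (hd : |t - t'| ≤ H)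
    (hA : 0 ≤ A) (hAt : A ≤ t) (hAA' : |A - A'| ≤ H) (ht : 0 < t) (ht' : 0 < t') :
    |(A + A')/k - A/t| ≤ 2*H/k := by
  have hk0 : 0 < k := by nlinarith
  have hH0 : 0 ≤ H := le_trans (abs_nonneg _) hd
  have h1 : (A + A')/k - A/t = (t*(A' - A) + (t - t')*A)/(k*t) := by
    field_simp
    rw [← hk]; ring
  rw [h1, abs_div, abs_of_pos (by positivity : (0:ℝ) < k*t)]
  have hAA2 : |A' - A| ≤ H := by rwa [abs_sub_comm]
  have h2 : |t*(A' - A) + (t - t')*A| ≤ 2*H*t := by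
    calc |t*(A' - A) + (t - t')*A| ≤ |t*(A' - A)| + |(t - t')*A| := abs_add_le _ _
      _ = t * |A' - A| + |t - t'| * A := by
          rw [abs_mul, abs_mul, abs_of_pos ht, abs_of_nonneg hA]
      _ ≤ t * H + H * t := by nlinarith
      _ = 2*H*t := by ring
  calc |t*(A' - A) + (t - t')*A| / (k*t) ≤ (2*H*t)/(k*t) := by gcongr
    _ = 2*H/k := by rw [mul_div_mul_right _ _ (ne_of_gt ht)]

lemma step_lemma (α H : ℝ) (hα0 : 0 < α) (hα1 : α < 1) (hH1 : 1 ≤ H)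
    (q : Fin m → U → ℝ) (hq : ∀ i u, q i u ∈ Set.Icc (0:ℝ) 1) (n : ℕ)
    (hcol : ∀ S : Finset U, S.card ≤ n →
      colDisc (starMatrix (Matrix.of fun i u => q i u)) S ≤ H)
    (S : Finset U) (hSn : S.card ≤ n) (hbig : 5 * H / α < (S.card : ℝ)) :
    ∃ T : Finset U, T ⊆ S ∧ 2 * H < (T.card : ℝ) ∧ 2 * (T.card:ℝ) ≤ (S.card:ℝ) ∧
      ∀ i : Fin m, |(∑ u ∈ S, q i u)/(S.card:ℝ) - (∑ u ∈ T, q i u)/(T.card:ℝ)|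
        ≤ 2*H/(S.card:ℝ) := by
  classical
  set Qm := starMatrix (Matrix.of fun i u => q i u) with hQm
  obtain ⟨χ, hχpm, hχeq⟩ := colDisc_exists Qm S
  have hrow : ∀ i : Fin (m+1), |∑ j ∈ S, Qm i j * χ j| ≤ H := by
    intro i
    have hle := le_ciSup (f := fun i : Fin (m+1) => |∑ j ∈ S, Qm i j * χ j|)
      (Set.Finite.bddAbove (Set.finite_range _)) i
    refine le_trans hle ?_
    rw [hχeq]; exact hcol S hSn
  set P := S.filter (fun j => χ j = 1) with hP
  set N := S.filter (fun j => ¬ χ j = 1) with hN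
  have hPS : P ⊆ S := Finset.filter_subset _ _
  have hNS : N ⊆ S := Finset.filter_subset _ _
  have hcard : P.card + N.card = S.card := Finset.card_filter_add_card_filter_not _
  have hχN : ∀ j ∈ N, χ j = -1 := by
    intro j hj
    rcases hχpm j (hNS hj) with h | h
    · exact absurd h (Finset.mem_filter.mp hj).2
    · exact h
  have hsplit : ∀ i : Fin (m+1), ∑ j ∈ S, Qm i j * χ j
      = (∑ j ∈ P, Qm i j) - ∑ j ∈ N, Qm i j := by
    intro i
    rw [← Finset.sum_filter_add_sum_filter_not S (fun j => χ j = 1) (fun j => Qm i j * χ j)]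
    have h1 : ∑ j ∈ P, Qm i j * χ j = ∑ j ∈ P, Qm i j :=
      Finset.sum_congr rfl fun j hj => by
        rw [(Finset.mem_filter.mp hj).2, mul_one]
    have h2 : ∑ j ∈ N, Qm i j * χ j = -∑ j ∈ N, Qm i j := by
      rw [← Finset.sum_neg_distrib]
      exact Finset.sum_congr rfl fun j hj => by rw [hχN j hj]; ring
    rw [h1, h2]
    ring
  have hQmlast : ∀ j, Qm (Fin.last m) j = 1 := by
    intro j
    simp [Qm, starMatrix]
  have hQmcast : ∀ (i : Fin m) (j : U), Qm i.castSucc j = q i j := by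
    intro i j
    simp [Qm, starMatrix, Matrix.of_apply, i.isLt]
  have hlast : |(P.card:ℝ) - (N.card:ℝ)| ≤ H := by
    have h := hrow (Fin.last m)
    rw [hsplit] at h
    have e1 : ∑ j ∈ P, Qm (Fin.last m) j = (P.card : ℝ) := by
      rw [Finset.sum_congr rfl fun j _ => hQmlast j]; simp
    have e2 : ∑ j ∈ N, Qm (Fin.last m) j = (N.card : ℝ) := by
      rw [Finset.sum_congr rfl fun j _ => hQmlast j]; simp
    rwa [e1, e2] at h
  have hqrow : ∀ i : Fin m, |(∑ j ∈ P, q i j) - ∑ j ∈ N, q i j| ≤ H := by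
    intro i
    have h := hrow i.castSucc
    rw [hsplit] at h
    rwa [Finset.sum_congr rfl fun j _ => hQmcast i j,
      Finset.sum_congr rfl fun j _ => hQmcast i j] at h
  have hqsplit : ∀ i : Fin m, ∑ u ∈ S, q i u = (∑ u ∈ P, q i u) + ∑ u ∈ N, q i u := by
    intro i
    rw [← Finset.sum_filter_add_sum_filter_not S (fun j => χ j = 1) (fun j => q i j)]
  have hcardR : (P.card:ℝ) + (N.card:ℝ) = (S.card:ℝ) := by exact_mod_cast hcard
  have hk0 : (0:ℝ) < S.card := lt_trans (by positivity) hbig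
  have h5 : 5*H < α * (S.card:ℝ) := by
    rw [div_lt_iff₀ hα0] at hbig; linarith [mul_comm α (S.card:ℝ)]
  have hkH : 5*H < (S.card:ℝ) := by nlinarith
  have hsum_nonneg : ∀ (i : Fin m) (T : Finset U), 0 ≤ ∑ u ∈ T, q i u :=
    fun i T => Finset.sum_nonneg fun u _ => (hq i u).1
  have hsum_le : ∀ (i : Fin m) (T : Finset U), (∑ u ∈ T, q i u) ≤ (T.card:ℝ) := by
    intro i T
    calc (∑ u ∈ T, q i u) ≤ ∑ u ∈ T, 1 := Finset.sum_le_sum fun u _ => (hq i u).2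
      _ = (T.card:ℝ) := by simp
  rcases le_total (P.card:ℝ) (N.card:ℝ) with hle | hle
  · have htpos : (0:ℝ) < P.card := by
      have : 2*(P.card:ℝ) ≥ (S.card:ℝ) - H := by
        cases abs_le.mp hlast; linarith
      nlinarith
    refine ⟨P, hPS, by nlinarith [abs_le.mp hlast], by linarith, fun i => ?_⟩
    rw [hqsplit i]
    exact arith H _ _ _ _ _ hcardR hlast (hsum_nonneg i P) (hsum_le i P) (hqrow i)
      htpos (by linarith)
  · have htpos : (0:ℝ) < N.card := by
      have : 2*(N.card:ℝ) ≥ (S.card:ℝ) - H := by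
        cases abs_le.mp hlast; linarith
      nlinarith
    have hlast' : |(N.card:ℝ) - (P.card:ℝ)| ≤ H := by rwa [abs_sub_comm]
    have hqrow' : ∀ i : Fin m, |(∑ j ∈ N, q i j) - ∑ j ∈ P, q i j| ≤ H := by
      intro i; rw [abs_sub_comm]; exact hqrow i
    refine ⟨N, hNS, by nlinarith [abs_le.mp hlast], by linarith, fun i => ?_⟩
    rw [hqsplit i, add_comm]
    exact arith H _ _ _ _ _ (by linarith) hlast' (hsum_nonneg i N) (hsum_le i N) (hqrow' i)
      htpos (by linarith)
lemma star_abs (q : Fin m → U → ℝ) (hq : ∀ i u, q i u ∈ Set.Icc (0:ℝ) 1) :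
    ∀ (i : Fin (m+1)) (j : U), |starMatrix (Matrix.of fun i u => q i u) i j| ≤ 1 := by
  intro i j
  by_cases h : (i : ℕ) < m
  · simp only [starMatrix, Matrix.of_apply, dif_pos h]
    exact abs_le.mpr ⟨by linarith [(hq ⟨i, h⟩ j).1], (hq ⟨i, h⟩ j).2⟩
  · simp [starMatrix, h]

lemma one_le_hdisc_star [Nonempty U] (q : Fin m → U → ℝ) (w : ℕ) (hw : 1 ≤ w)
    (hq : ∀ i u, q i u ∈ Set.Icc (0:ℝ) 1) :
    1 ≤ hdisc (starMatrix (Matrix.of fun i u => q i u)) w := by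
  set Qm := starMatrix (Matrix.of fun i u => q i u) with hQm
  obtain u := Classical.arbitrary U
  have hQmlast : ∀ j, Qm (Fin.last m) j = 1 := by intro j; simp [Qm, starMatrix]
  have h1 : (1:ℝ) ≤ colDisc Qm {u} := by
    refine le_csInf ⟨_, ⟨fun _ => 1, fun j _ => Or.inl rfl, rfl⟩⟩ ?_
    rintro v ⟨χ, hχ, rfl⟩
    have hone : (1:ℝ) = |∑ j ∈ ({u}:Finset U), Qm (Fin.last m) j * χ j| := by
      rw [Finset.sum_singleton, hQmlast u, one_mul]
      rcases hχ u (Finset.mem_singleton_self u) with h | h <;> rw [h] <;> norm_num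
    rw [hone]
    exact le_ciSup (f := fun i : Fin (m+1) => |∑ j ∈ ({u}:Finset U), Qm i j * χ j|)
      (Set.Finite.bddAbove (Set.finite_range _)) (Fin.last m)
  refine le_trans h1 (le_csSup ?_ ⟨{u}, by simpa using hw, rfl⟩)
  refine ⟨(Fintype.card U : ℝ), ?_⟩
  rintro v ⟨T, -, rfl⟩
  exact colDisc_le_card _ (star_abs q hq) T

lemma main_ind (α H : ℝ) (hα0 : 0 < α) (hα1 : α < 1) (hH1 : 1 ≤ H)
    (q : Fin m → U → ℝ) (hq : ∀ i u, q i u ∈ Set.Icc (0:ℝ) 1) (n : ℕ)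
    (hcol : ∀ S : Finset U, S.card ≤ n →
      colDisc (starMatrix (Matrix.of fun i u => q i u)) S ≤ H) :
    ∀ (k : ℕ) (S : Finset U), S.card ≤ k → 1 ≤ S.card → S.card ≤ n →
      ∃ T : Finset U, T ⊆ S ∧ 1 ≤ T.card ∧ (T.card : ℝ) ≤ 5*H/α ∧
        (T = S ∨ ∀ i : Fin m,
          |(∑ u ∈ S, q i u)/(S.card:ℝ) - (∑ u ∈ T, q i u)/(T.card:ℝ)|
            ≤ 4*α/5 - 2*H/(S.card:ℝ)) := by
  intro k
  induction k using Nat.strong_induction_on with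
  | _ k ih =>
    intro S hSk h1 hn
    by_cases hc : (S.card:ℝ) ≤ 5*H/α
    · exact ⟨S, Finset.Subset.refl S, h1, hc, Or.inl rfl⟩
    · push_neg at hc
      obtain ⟨T₁, hT₁S, h2H, h2t, herr1⟩ :=
        step_lemma α H hα0 hα1 hH1 q hq n hcol S hn hc
      have hH0 : (0:ℝ) < H := lt_of_lt_of_le one_pos hH1
      have ht1pos : (0:ℝ) < T₁.card := by nlinarith
      have ht1 : 1 ≤ T₁.card := Nat.cast_pos.mp ht1pos
      have hSpos : (0:ℝ) < S.card := by
        have : (1:ℝ) ≤ (S.card:ℝ) := by exact_mod_cast h1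
        linarith
      have hlt : T₁.card < S.card := by
        have : (T₁.card:ℝ) < (S.card:ℝ) := by nlinarith
        exact_mod_cast this
      obtain ⟨T, hTT₁, hT1, hTb, hdisj⟩ := ih T₁.card (lt_of_lt_of_le hlt hSk) T₁
        le_rfl ht1 (le_trans (Finset.card_le_card hT₁S) hn)
      refine ⟨T, hTT₁.trans hT₁S, hT1, hTb, Or.inr fun i => ?_⟩
      have h5 : 5*H < α*(S.card:ℝ) := by
        rw [div_lt_iff₀ hα0] at hc
        linarith [mul_comm α (S.card:ℝ)]
      rcases hdisj with rfl | herr2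
      · refine le_trans (herr1 i) ?_
        have hb : 2*H/(S.card:ℝ) ≤ 2*α/5 := by
          rw [div_le_iff₀ hSpos]; nlinarith
        linarith
      · have htri := abs_sub_le ((∑ u ∈ S, q i u)/(S.card:ℝ))
          ((∑ u ∈ T₁, q i u)/(T₁.card:ℝ)) ((∑ u ∈ T, q i u)/(T.card:ℝ))
        have hb : 4*H/(S.card:ℝ) ≤ 2*H/(T₁.card:ℝ) := by
          rw [div_le_div_iff₀ hSpos ht1pos]; nlinarith
        have := herr1 i
        have := herr2 i
        have h2 : 2*H/(S.card:ℝ) + 2*H/(S.card:ℝ) = 4*H/(S.card:ℝ) := by ring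
        linarith
end Main

theorem stmt16 (α : ℝ) (hα : α ∈ Set.Ioo (0 : ℝ) 1)
    (U : Type) [Fintype U] (m : ℕ)
    (q : Fin m → U → ℝ) (hq : ∀ i u, q i u ∈ Set.Icc (0 : ℝ) 1)
    (n : ℕ) (hn1 : 1 ≤ n) (hnN : n ≤ Fintype.card U)
    (hH : hdiscStar (Matrix.of fun i u => q i u) n ≤ α * n / 4)
    (x : Fin n → U) (hx : Function.Injective x) :
    ∃ s : ℕ, 1 ≤ s ∧ (s : ℝ) ≤ 5 * hdiscStar (Matrix.of fun i u => q i u) n / α ∧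
      ∃ y : Fin s → U,
        ∀ i, |(∑ a, q i (x a)) / n - (∑ b, q i (y b)) / s| ≤ α := by
  classical
  obtain ⟨hα0, hα1⟩ := hα
  have hU : Nonempty U := Fintype.card_pos_iff.mp (lt_of_lt_of_le hn1 hnN)
  set H := hdiscStar (Matrix.of fun i u => q i u) n with hHdef
  have hH1 : 1 ≤ H := one_le_hdisc_star q n hn1 hq
  have hH0 : (0:ℝ) < H := lt_of_lt_of_le one_pos hH1
  have hcol : ∀ S : Finset U, S.card ≤ n →
      colDisc (starMatrix (Matrix.of fun i u => q i u)) S ≤ H :=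
    fun S hS => colDisc_le_hdisc _ (star_abs q hq) n S hS
  set S₀ : Finset U := Finset.image x Finset.univ with hS₀
  have hcard : S₀.card = n := by
    rw [hS₀, Finset.card_image_of_injective _ hx, Finset.card_univ, Fintype.card_fin]
  obtain ⟨T, hTS, hT1, hTb, hdisj⟩ := main_ind α H hα0 hα1 hH1 q hq n hcol n S₀
    (le_of_eq hcard) (hcard ▸ hn1) (le_of_eq hcard)
  refine ⟨T.card, hT1, hTb, fun b => ((T.equivFin.symm b : T) : U), fun i => ?_⟩
  have hsx : ∑ a, q i (x a) = ∑ u ∈ S₀, q i u :=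
    (Finset.sum_image fun a _ b _ h => hx h).symm
  have hsy : ∑ b, q i ((T.equivFin.symm b : T) : U) = ∑ u ∈ T, q i u := by
    rw [Equiv.sum_comp T.equivFin.symm (fun u : T => q i (u : U))]
    exact Finset.sum_coe_sort T (q i)
  rw [hsx, hsy, ← hcard]
  rcases hdisj with rfl | herr
  · simp [le_of_lt hα0]
  · refine le_trans (herr i) ?_
    have : 0 < 2*H/(S₀.card:ℝ) := by
      rw [hcard]
      have : (0:ℝ) < n := by exact_mod_cast hn1
      positivity
    linarith
end
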